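/- arXiv:math/0612569 — 6 statements merged into one kernel-verified Lean document; each statement's English description precedes it below -/
import Mathlib

section
/- Let R be a ring and let 𝒞 be a class of R-modules that is stable under filtered colimits. Then 𝒞 is stable under direct summands: if M ≅ N ⊕ P and M belongs to 𝒞, then N belongs to 𝒞. -/
/-!
Vogel regularity: basic definitions.
All modules are right modules in the paper; here we follow the standard
convention of formalizing one-sided module theory with `Module R M`,
and "right modules over `R`" are realized as (left) modules over `Rᵐᵒᵖ`
where the distinction matters.
-/

universe u

open CategoryTheory CategoryTheory.Limits

/-- A class of `R`-modules is stable under filtered colimits if, for every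
filtered diagram of modules all of whose objects belong to the class, the
colimit (i.e. the point of any colimit cocone) again belongs to the class. -/
def StableUnderFilteredColimits (R : Type u) [Ring R] (S : Set (ModuleCat.{u} R)) : Prop :=
  ∀ (J : Type u) (_ : SmallCategory J) (_ : IsFiltered J)
    (F : J ⥤ ModuleCat.{u} R) (c : Cocone F), IsColimit c →
    (∀ j : J, F.obj j ∈ S) → c.pt ∈ S

/-- if a class of `R`-modules is stable under filtered colimits, then
it is stable under direct summands: if `M ≅ N ⊕ P` and `M` belongs to the class,
then `N` belongs to the class. -/
theorem stableUnderFilteredColimits_stable_under_direct_summands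
    (R : Type u) [Ring R] (S : Set (ModuleCat.{u} R))
    (hS : StableUnderFilteredColimits R S)
    (M N P : ModuleCat.{u} R) (e : M ≃ₗ[R] (N × P)) (hM : M ∈ S) :
    N ∈ S := by
  classical
  set π : M →ₗ[R] N := (LinearMap.fst R N P).comp e.toLinearMap with hπ
  set ι : N →ₗ[R] M := e.symm.toLinearMap.comp (LinearMap.inl R N P) with hι
  have hπι : π.comp ι = LinearMap.id := by
    ext x; simp [hπ, hι]
  set p : M →ₗ[R] M := ι.comp π with hp
  have hpp : p.comp p = p := by
    rw [hp, LinearMap.comp_assoc, ← LinearMap.comp_assoc π ι π, hπι,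
      LinearMap.id_comp]
  have hpow : ∀ k, p ^ (k + 1) = p := by
    intro k
    induction k with
    | zero => simp
    | succ k ih => rw [pow_succ, ih, Module.End.mul_eq_comp, hpp]
  have hπp : π.comp p = π := by
    rw [hp, ← LinearMap.comp_assoc, hπι, LinearMap.id_comp]
  -- the diagram
  letI instJ : SmallCategory (ULift.{u} ℕ) := Preorder.smallCategory _
  haveI instFil : IsFiltered (ULift.{u} ℕ) := inferInstance
  let F : ULift.{u} ℕ ⥤ ModuleCat.{u} R :=
    { obj := fun _ => M
      map := fun {a b} _ => ModuleCat.ofHom (p ^ (b.down - a.down) : M →ₗ[R] M)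
      map_id := fun a => by simp; rfl
      map_comp := fun {a b c} f g => by
        have hab : a.down ≤ b.down := f.down.down
        have hbc : b.down ≤ c.down := g.down.down
        apply ModuleCat.hom_ext
        show (p ^ (c.down - a.down) : M →ₗ[R] M)
          = (p ^ (c.down - b.down)).comp (p ^ (b.down - a.down))
        rw [← Module.End.mul_eq_comp, ← pow_add]
        congr 1
        omega }
  let c : Cocone F :=
    { pt := N
      ι :=
        { app := fun _ => ModuleCat.ofHom π
          naturality := fun {a b} f => by
            apply ModuleCat.hom_ext
            show π.comp (p ^ (b.down - a.down)) = LinearMap.comp LinearMap.id π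
            rw [LinearMap.id_comp]
            rcases Nat.eq_zero_or_eq_succ_pred (b.down - a.down) with h | h
            · rw [h, pow_zero]; rfl
            · rw [h, hpow, hπp] } }
  have hc : IsColimit c :=
    { desc := fun s => ModuleCat.ofHom ((s.ι.app ⟨0⟩).hom.comp ι)
      fac := fun s j => by
        have h1 : ∀ n : ℕ,
            (s.ι.app ⟨n + 1⟩).hom.comp p = (s.ι.app ⟨n⟩).hom := by
          intro n
          have := s.w (j' := ⟨n⟩) (j := ⟨n + 1⟩) ⟨⟨Nat.le_succ n⟩⟩
          simpa [F] using congrArg ModuleCat.Hom.hom this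
        have hw : ∀ n : ℕ,
            (s.ι.app ⟨n⟩).hom.comp p = (s.ι.app ⟨n⟩).hom := by
          intro n
          calc (s.ι.app ⟨n⟩).hom.comp p
              = ((s.ι.app ⟨n + 1⟩).hom.comp p).comp p := by rw [h1]
            _ = (s.ι.app ⟨n + 1⟩).hom.comp (p.comp p) := by
                rw [LinearMap.comp_assoc]
            _ = (s.ι.app ⟨n + 1⟩).hom.comp p := by rw [hpp]
            _ = (s.ι.app ⟨n⟩).hom := h1 n
        obtain ⟨n⟩ := j
        have h0 : (s.ι.app ⟨n⟩).hom.comp (p ^ n) = (s.ι.app ⟨0⟩).hom := by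
          have := s.w (j' := ⟨0⟩) (j := ⟨n⟩) ⟨⟨Nat.zero_le n⟩⟩
          simpa [F] using congrArg ModuleCat.Hom.hom this
        apply ModuleCat.hom_ext
        show LinearMap.comp
            (((s.ι.app ⟨0⟩).hom).comp ι) π = (s.ι.app ⟨n⟩).hom
        rw [LinearMap.comp_assoc, ← hp, ← h0, LinearMap.comp_assoc,
          ← Module.End.mul_eq_comp, ← pow_succ, hpow, hw]
      uniq := fun s m hm => by
        have h0 := hm ⟨0⟩
        apply ModuleCat.hom_ext
        show m.hom = ((s.ι.app ⟨0⟩).hom).comp ι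
        rw [← h0]
        show m.hom = (LinearMap.comp (m.hom : N →ₗ[R] s.pt) π).comp ι
        rw [LinearMap.comp_assoc, hπι, LinearMap.comp_id] }
  refine hS (ULift.{u} ℕ) instJ instFil F c hc ?_
  intro j
  exact hM
end

section
/- Let R be a ring and let 𝒞 be an exact class of R-modules. Then 𝒞 contains the module R itself if and only if 𝒞 contains every flat R-module. -/
universe u

open CategoryTheory CategoryTheory.Limits

/-- The 2/3 axiom: for every short exact sequence `0 → M → N → P → 0`, if two of the
three modules belong to the class, then so does the third. -/
def SatisfiesTwoOfThree (R : Type u) [Ring R] (S : Set (ModuleCat.{u} R)) : Prop :=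
  ∀ (M N P : ModuleCat.{u} R) (f : M →ₗ[R] N) (g : N →ₗ[R] P),
    Function.Injective f → Function.Surjective g → Function.Exact f g →
      ((M ∈ S → N ∈ S → P ∈ S) ∧ (M ∈ S → P ∈ S → N ∈ S) ∧ (N ∈ S → P ∈ S → M ∈ S))

/-- A class of `R`-modules is exact if it is stable under filtered colimits and
satisfies the 2/3 axiom. -/
def IsExactClass (R : Type u) [Ring R] (S : Set (ModuleCat.{u} R)) : Prop :=
  StableUnderFilteredColimits R S ∧ SatisfiesTwoOfThree R S

/-- An `R`-module is regular (in the sense of Vogel) if it belongs to every exact class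
containing the module `R` itself (i.e. to the smallest such class). -/
def IsRegularModule (R : Type u) [Ring R] (M : ModuleCat.{u} R) : Prop :=
  ∀ S : Set (ModuleCat.{u} R), IsExactClass R S → ModuleCat.of R R ∈ S → M ∈ S

/-- A ring `R` is regular in the sense of Vogel if every `R`-module is regular,
i.e. every exact class of `R`-modules containing `R` contains all `R`-modules. -/
def IsVogelRegular (R : Type u) [Ring R] : Prop :=
  ∀ M : ModuleCat.{u} R, IsRegularModule R M

/-- A ring is right regular (in the sense of Vogel) if the opposite ring is regular for
left modules, i.e. the category of right `R`-modules (= left `Rᵐᵒᵖ`-modules) has the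
Vogel regularity property. -/
def IsVogelRightRegular (R : Type u) [Ring R] : Prop := IsVogelRegular Rᵐᵒᵖ

/-- A module is flat iff it is a filtered colimit of finitely generated free modules
(Lazard's theorem); we take this characterization as the definition of flatness,
which makes sense over an arbitrary (possibly non-commutative) ring. -/
def IsLazardFlat (R : Type u) [Ring R] (M : Type u) [AddCommGroup M] [Module R M] : Prop :=
  ∃ (J : Type u) (_ : SmallCategory J) (_ : IsFiltered J)
    (F : J ⥤ ModuleCat.{u} R) (c : Cocone F) (_ : IsColimit c),
    (∀ j : J, ∃ n : ℕ, Nonempty ((F.obj j) ≃ₗ[R] (Fin n → R))) ∧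
    Nonempty (c.pt ≃ₗ[R] M)

section Aux

variable {R : Type u} [Ring R] {S : Set (ModuleCat.{u} R)}

lemma aux_zero_mem (hS : IsExactClass R S) (hR : ModuleCat.of R R ∈ S) :
    ModuleCat.of R PUnit.{u+1} ∈ S := by
  have := (hS.2 (ModuleCat.of R R) (ModuleCat.of R R) (ModuleCat.of R PUnit.{u+1})
    LinearMap.id 0 (fun a b h => h) (fun y => ⟨0, rfl⟩)
    (by intro y; constructor
        · intro _; exact ⟨y, rfl⟩
        · intro _; rfl)).1
  exact this hR hR

lemma aux_iso_mem (hS : IsExactClass R S) (hR : ModuleCat.of R R ∈ S)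
    {M N : ModuleCat.{u} R} (e : M ≃ₗ[R] N) (hM : M ∈ S) : N ∈ S := by
  have h0 := aux_zero_mem hS hR
  have := (hS.2 M N (ModuleCat.of R PUnit.{u+1})
    e.toLinearMap 0 e.injective (fun y => ⟨0, rfl⟩)
    (by intro y; constructor
        · intro _; exact ⟨e.symm y, e.apply_symm_apply y⟩
        · intro _; rfl)).2.1
  exact this hM h0

lemma aux_pi_mem (hS : IsExactClass R S) (hR : ModuleCat.of R R ∈ S) :
    ∀ n : ℕ, ModuleCat.of R (Fin n → R) ∈ S := by
  intro n
  induction n with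
  | zero =>
    refine aux_iso_mem hS hR
      (⟨⟨⟨fun _ => (fun i => i.elim0), fun _ _ => Subsingleton.elim _ _⟩,
        fun _ _ => Subsingleton.elim _ _⟩,
        fun _ => PUnit.unit, fun x => rfl, fun x => Subsingleton.elim _ _⟩ :
        (PUnit.{u+1}) ≃ₗ[R] (Fin 0 → R)) (aux_zero_mem hS hR)
  | succ n ih =>
    refine (hS.2 (ModuleCat.of R R) (ModuleCat.of R (Fin (n+1) → R))
      (ModuleCat.of R (Fin n → R))
      (LinearMap.single R (fun _ => R) (Fin.last n))
      (LinearMap.funLeft R R Fin.castSucc)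
      ?_ (LinearMap.funLeft_surjective_of_injective R R _
        (Fin.castSucc_injective n)) ?_).2.1 hR ih
    · intro a b h
      have h2 : Pi.single (M := fun _ => R) (Fin.last n) a (Fin.last n)
          = Pi.single (M := fun _ => R) (Fin.last n) b (Fin.last n) := congrFun h _
      simpa using h2
    · intro v
      constructor
      · intro hv
        refine ⟨v (Fin.last n), funext fun i => ?_⟩
        refine Fin.lastCases ?_ (fun j => ?_) i
        · exact Pi.single_eq_same _ _
        · have h1 : v j.castSucc = 0 := congrFun hv j
          show Pi.single (M := fun _ => R) (Fin.last n) (v (Fin.last n)) j.castSucc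
            = v j.castSucc
          rw [Pi.single_eq_of_ne (Fin.castSucc_lt_last j).ne, h1]
      · rintro ⟨r, rfl⟩
        funext j
        show Pi.single (M := fun _ => R) (Fin.last n) r j.castSucc = 0
        exact Pi.single_eq_of_ne (Fin.castSucc_lt_last j).ne _

end Aux

/-- an exact class of `R`-modules contains the module `R` itself if and
only if it contains every flat `R`-module. -/
theorem isExactClass_self_mem_iff_flat_subset
    (R : Type u) [Ring R] (S : Set (ModuleCat.{u} R)) (hS : IsExactClass R S) :
    ModuleCat.of R R ∈ S ↔
      ∀ M : ModuleCat.{u} R, IsLazardFlat R M → M ∈ S := by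
  constructor
  · rintro hR M ⟨J, hJ1, hJ2, F, c, hc, hobj, ⟨e⟩⟩
    refine aux_iso_mem hS hR e ?_
    refine hS.1 J hJ1 hJ2 F c hc fun j => ?_
    obtain ⟨n, ⟨ej⟩⟩ := hobj j
    exact aux_iso_mem hS hR ej.symm (aux_pi_mem hS hR n)
  · intro h
    refine h (ModuleCat.of R R) ?_
    refine ⟨Discrete PUnit.{u+1}, inferInstance, inferInstance,
      (Functor.const _).obj (ModuleCat.of R R),
      ⟨ModuleCat.of R R, ⟨fun _ => 𝟙 _, by intros; simp⟩⟩, ?_, ?_, ⟨LinearEquiv.refl R R⟩⟩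
    · exact ⟨fun s => s.ι.app ⟨PUnit.unit⟩, by intros; simp, by
        intro s m hm; simpa using hm ⟨PUnit.unit⟩⟩
    · exact fun j => ⟨1, ⟨(LinearEquiv.funUnique (Fin 1) R R).symm⟩⟩
end

section
/- Let R be a ring such that every finitely presented R-module has finite projective (homological) dimension. Then R is regular in the sense of Vogel. -/
universe u

open CategoryTheory CategoryTheory.Limits




/-- A module has a finite projective resolution (i.e. finite projective/homological
dimension) if it admits a projective resolution whose terms eventually vanish. -/
def HasFiniteProjectiveResolution (R : Type u) [Ring R] (M : ModuleCat.{u} R) : Prop :=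
  ∃ P : ProjectiveResolution M, ∃ n : ℕ, ∀ i : ℕ, n ≤ i → Subsingleton (P.complex.X i)


section Basics
variable {R : Type u} [Ring R] {S : Set (ModuleCat.{u} R)}
  (h23 : SatisfiesTwoOfThree R S) (hR : ModuleCat.of R R ∈ S)

include h23 hR in
lemma subsingleton_mem (M : ModuleCat.{u} R) (hM : Subsingleton M) : M ∈ S := by
  have := (h23 (ModuleCat.of R R) (ModuleCat.of R R) M LinearMap.id 0
    (fun a b h => h) (fun y => ⟨0, (Subsingleton.elim _ _)⟩)
    (by intro y; constructor
        · intro _; exact ⟨y, rfl⟩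
        · intro _; exact Subsingleton.elim _ _)).1
  exact this hR hR

include h23 hR in
lemma mem_of_equiv {M N : ModuleCat.{u} R} (hM : M ∈ S) (e : M ≃ₗ[R] N) : N ∈ S := by
  have h0 : ModuleCat.of R PUnit ∈ S :=
    subsingleton_mem h23 hR _ (by constructor; intro a b; rfl)
  refine (h23 M N (ModuleCat.of R PUnit) e.toLinearMap 0 e.injective
    (fun y => ⟨0, Subsingleton.elim _ _⟩) ?_).2.1 hM h0
  intro y
  constructor
  · intro _; exact ⟨e.symm y, e.apply_symm_apply y⟩
  · intro _; exact Subsingleton.elim _ _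

include h23 hR in
lemma finfree_mem (n : ℕ) : ModuleCat.of R (Fin n → R) ∈ S := by
  induction n with
  | zero => exact subsingleton_mem h23 hR _ (by constructor; intro a b; funext i; exact i.elim0)
  | succ n ih =>
    refine (h23 (ModuleCat.of R R) (ModuleCat.of R (Fin (n+1) → R)) (ModuleCat.of R (Fin n → R))
      (LinearMap.single R (fun _ : Fin (n+1) => R) (Fin.last n))
      (LinearMap.funLeft R R Fin.castSucc) ?_ ?_ ?_).2.1 hR ih
    · intro a b hab
      have : Pi.single (M := fun _ : Fin (n+1) => R) (Fin.last n) a (Fin.last n)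
          = Pi.single (M := fun _ : Fin (n+1) => R) (Fin.last n) b (Fin.last n) :=
        congr_fun hab (Fin.last n)
      simpa [Pi.single_apply] using this
    · intro y
      exact ⟨fun i => if h : (i : ℕ) < n then y ⟨i, h⟩ else 0, by
        funext j
        show (fun i => if h : (i : ℕ) < n then y ⟨i, h⟩ else 0) (Fin.castSucc j) = y j
        simp [Fin.castSucc, Fin.castAdd, Fin.castLE, j.isLt]⟩
    · intro y
      constructor
      · intro hy
        refine ⟨y (Fin.last n), ?_⟩
        funext i
        induction i using Fin.lastCases with
        | last =>
          show Pi.single (M := fun _ : Fin (n+1) => R) (Fin.last n) (y (Fin.last n)) (Fin.last n) = y (Fin.last n)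
          simp
        | cast j =>
          have h1 : y (Fin.castSucc j) = 0 := congr_fun hy j
          show Pi.single (M := fun _ : Fin (n+1) => R) (Fin.last n) (y (Fin.last n)) (Fin.castSucc j) = y (Fin.castSucc j)
          simp [Pi.single_apply, (Fin.castSucc_lt_last j).ne, h1]
      · rintro ⟨x, rfl⟩
        funext j
        show Pi.single (M := fun _ : Fin (n+1) => R) (Fin.last n) x (Fin.castSucc j) = 0
        simp [Pi.single_apply, (Fin.castSucc_lt_last j).ne]
end Basics


section Free
variable (R : Type u) [Ring R] (ι : Type u)

noncomputable def freeDiagram : Finset ι ⥤ ModuleCat.{u} R where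
  obj s := ModuleCat.of R (↥s →₀ R)
  map {s t} f := ModuleCat.ofHom (Finsupp.lmapDomain R R
    (fun a => (⟨a.1, leOfHom f a.2⟩ : ↥t)))
  map_id s := by
    refine ModuleCat.hom_ext (Finsupp.lhom_ext fun a r => ?_)
    show Finsupp.mapDomain _ (Finsupp.single a r) = Finsupp.single a r
    rw [Finsupp.mapDomain_single]
  map_comp {s t u} f g := by
    refine ModuleCat.hom_ext (Finsupp.lhom_ext fun a r => ?_)
    show Finsupp.mapDomain _ (Finsupp.single a r)
      = Finsupp.mapDomain _ (Finsupp.mapDomain _ (Finsupp.single a r))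
    rw [Finsupp.mapDomain_single, Finsupp.mapDomain_single, Finsupp.mapDomain_single]

lemma freeDiagram_map_single {s t : Finset ι} (h : s ≤ t) (a : ↥s) (r : R) :
    ((freeDiagram R ι).map (homOfLE h)).hom (Finsupp.single a r)
      = Finsupp.single (⟨a.1, h a.2⟩ : ↥t) r := by
  show Finsupp.mapDomain _ (Finsupp.single a r) = _
  rw [Finsupp.mapDomain_single]

noncomputable def freeCocone : Cocone (freeDiagram R ι) where
  pt := ModuleCat.of R (ι →₀ R)
  ι := {
    app := fun s => ModuleCat.ofHom (Finsupp.lmapDomain R R (Subtype.val : ↥s → ι))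
    naturality := fun s t f => by
      refine ModuleCat.hom_ext (Finsupp.lhom_ext fun a r => ?_)
      show Finsupp.mapDomain Subtype.val (Finsupp.mapDomain _ (Finsupp.single a r))
        = Finsupp.mapDomain Subtype.val (Finsupp.single a r)
      simp only [Finsupp.mapDomain_single] }

lemma freeCocone_app_single (s : Finset ι) (a : ↥s) (r : R) :
    ((freeCocone R ι).ι.app s).hom (Finsupp.single a r) = Finsupp.single (a : ι) r := by
  show Finsupp.mapDomain Subtype.val (Finsupp.single a r) = _
  rw [Finsupp.mapDomain_single]

noncomputable def freeDesc (t : Cocone (freeDiagram R ι)) : (ι →₀ R) →ₗ[R] t.pt :=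
  Finsupp.lsum ℕ (fun i =>
    (t.ι.app {i}).hom ∘ₗ
      Finsupp.lsingle (⟨i, Finset.mem_singleton_self i⟩ : ↥({i} : Finset ι)))

lemma freeDesc_single (t : Cocone (freeDiagram R ι)) (i : ι) (r : R) :
    freeDesc R ι t (Finsupp.single i r)
      = (t.ι.app {i}).hom
          (Finsupp.single (⟨i, Finset.mem_singleton_self i⟩ : ↥({i} : Finset ι)) r) := by
  unfold freeDesc
  rw [Finsupp.lsum_single]
  rfl

noncomputable def freeIsColimit : IsColimit (freeCocone R ι) where
  desc t := ModuleCat.ofHom (freeDesc R ι t)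
  fac t s := by
    refine ModuleCat.hom_ext (Finsupp.lhom_ext fun a r => ?_)
    have h1 : ({(a : ι)} : Finset ι) ≤ s := by simp [Finset.singleton_subset_iff]
    have h2 : (t.ι.app s).hom
        (((freeDiagram R ι).map (homOfLE h1)).hom
          (Finsupp.single (⟨a, Finset.mem_singleton_self _⟩ : ↥({(a:ι)} : Finset ι)) r))
        = (t.ι.app {(a:ι)}).hom (Finsupp.single ⟨a, Finset.mem_singleton_self _⟩ r) :=
      congr_fun (congr_arg (fun (f : (_ : ModuleCat.{u} R) ⟶ _) => (f.hom : _ → _)) (t.w (homOfLE h1))) _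
    rw [freeDiagram_map_single] at h2
    have e0 : (((freeCocone R ι).ι.app s) ≫ ModuleCat.ofHom (freeDesc R ι t)).hom (Finsupp.single a r)
        = freeDesc R ι t (((freeCocone R ι).ι.app s).hom (Finsupp.single a r)) := rfl
    refine e0.trans ?_
    rw [freeCocone_app_single, freeDesc_single]
    exact h2.symm
  uniq t m hm := by
    refine ModuleCat.hom_ext (Finsupp.lhom_ext fun i r => ?_)
    have h2 : m.hom
        (((freeCocone R ι).ι.app {i}).hom
          (Finsupp.single (⟨i, Finset.mem_singleton_self i⟩ : ↥({i} : Finset ι)) r))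
        = (t.ι.app {i}).hom (Finsupp.single ⟨i, Finset.mem_singleton_self i⟩ r) :=
      congr_fun (congr_arg (fun (f : (_ : ModuleCat.{u} R) ⟶ _) => (f.hom : _ → _)) (hm {i})) _
    rw [freeCocone_app_single] at h2
    have h2' : m.hom (Finsupp.single i r)
        = (t.ι.app {i}).hom (Finsupp.single ⟨i, Finset.mem_singleton_self i⟩ r) := h2
    show m.hom (Finsupp.single i r) = freeDesc R ι t (Finsupp.single i r)
    rw [h2', freeDesc_single]
end Free


section FGColim
variable (R : Type u) [Ring R] (M : Type u) [AddCommGroup M] [Module R M]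

abbrev FGSub := {N : Submodule R M // N.FG}

instance : Nonempty (FGSub R M) := ⟨⟨⊥, Submodule.fg_bot⟩⟩

instance : IsDirected (FGSub R M) (· ≤ ·) :=
  ⟨fun a b => ⟨⟨a.1 ⊔ b.1, a.2.sup b.2⟩, Subtype.coe_le_coe.1 le_sup_left,
    Subtype.coe_le_coe.1 le_sup_right⟩⟩

noncomputable def fgDiagram : FGSub R M ⥤ ModuleCat.{u} R where
  obj j := ModuleCat.of R j.1
  map {j j'} f := ModuleCat.ofHom (Submodule.inclusion (leOfHom f))
  map_id j := ModuleCat.hom_ext (LinearMap.ext fun x => rfl)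
  map_comp f g := ModuleCat.hom_ext (LinearMap.ext fun x => rfl)

noncomputable def fgCocone : Cocone (fgDiagram R M) where
  pt := ModuleCat.of R M
  ι := {
    app := fun j => ModuleCat.ofHom j.1.subtype
    naturality := fun j j' f => ModuleCat.hom_ext (LinearMap.ext fun x => rfl) }

variable {R M}

noncomputable def tapp (t : Cocone (fgDiagram R M)) (j : FGSub R M) :
    ↥j.1 →ₗ[R] ↑t.pt := (t.ι.app j).hom

lemma fgCocone_key (t : Cocone (fgDiagram R M)) (j j' : FGSub R M) (hjj' : j ≤ j')
    (x : M) (hx : x ∈ j.1) :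
    tapp t j ⟨x, hx⟩ = tapp t j' ⟨x, hjj' hx⟩ := by
  have := congr_fun (congr_arg (fun (f : (_ : ModuleCat.{u} R) ⟶ _) => (f.hom : _ → _)) (t.w (homOfLE hjj')))
    (⟨x, hx⟩ : ↥j.1)
  exact this.symm

lemma fgCocone_key2 (t : Cocone (fgDiagram R M)) (j j' : FGSub R M)
    (x : M) (hx : x ∈ j.1) (hx' : x ∈ j'.1) :
    tapp t j ⟨x, hx⟩ = tapp t j' ⟨x, hx'⟩ := by
  have h1 := fgCocone_key t j ⟨j.1 ⊔ j'.1, j.2.sup j'.2⟩ (Subtype.coe_le_coe.1 le_sup_left) x hx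
  have h2 := fgCocone_key t j' ⟨j.1 ⊔ j'.1, j.2.sup j'.2⟩ (Subtype.coe_le_coe.1 le_sup_right) x hx'
  rw [h1, h2]

variable (R M) in
noncomputable def fgDesc (t : Cocone (fgDiagram R M)) : M →ₗ[R] ↑t.pt where
  toFun x := tapp t ⟨Submodule.span R {x}, Submodule.fg_span_singleton x⟩
      ⟨x, Submodule.mem_span_singleton_self x⟩
  map_add' x y := by
    set j : FGSub R M := ⟨Submodule.span R {x} ⊔ Submodule.span R {y},
      (Submodule.fg_span_singleton x).sup (Submodule.fg_span_singleton y)⟩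
    have hx : x ∈ j.1 := le_sup_left (α := Submodule R M) (Submodule.mem_span_singleton_self x)
    have hy : y ∈ j.1 := le_sup_right (α := Submodule R M) (Submodule.mem_span_singleton_self y)
    have hxy : x + y ∈ j.1 := j.1.add_mem hx hy
    dsimp only
    rw [fgCocone_key2 t _ j _ _ hxy, fgCocone_key2 t _ j x _ hx, fgCocone_key2 t _ j y _ hy]
    have : (⟨x + y, hxy⟩ : ↥j.1) = ⟨x, hx⟩ + ⟨y, hy⟩ := rfl
    rw [this, map_add]
  map_smul' r x := by
    have hrx : r • x ∈ Submodule.span R {x} :=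
      Submodule.smul_mem _ r (Submodule.mem_span_singleton_self x)
    dsimp only
    rw [fgCocone_key2 t _ ⟨Submodule.span R {x}, Submodule.fg_span_singleton x⟩ _ _ hrx]
    have : (⟨r • x, hrx⟩ : ↥(Submodule.span R {x}))
        = r • ⟨x, Submodule.mem_span_singleton_self x⟩ := rfl
    rw [this, map_smul]
    rfl

noncomputable def fgIsColimit : IsColimit (fgCocone R M) where
  desc t := ModuleCat.ofHom (fgDesc R M t)
  fac t j := by
    refine ModuleCat.hom_ext (LinearMap.ext fun v => ?_)
    show fgDesc R M t (((fgCocone R M).ι.app j).hom v) = tapp t j v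
    have h1 : ((fgCocone R M).ι.app j).hom v = v.1 := rfl
    rw [h1]
    show tapp t ⟨Submodule.span R {v.1}, Submodule.fg_span_singleton v.1⟩
      ⟨v.1, Submodule.mem_span_singleton_self v.1⟩ = tapp t j v
    rw [fgCocone_key2 t _ j v.1 _ v.2]
    exact congr_arg _ (Subtype.ext rfl)
  uniq t m hm := by
    refine ModuleCat.hom_ext (LinearMap.ext fun x => ?_)
    set j : FGSub R M := ⟨Submodule.span R {x}, Submodule.fg_span_singleton x⟩
    have h1 : x = ((fgCocone R M).ι.app j).hom ⟨x, Submodule.mem_span_singleton_self x⟩ := rfl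
    show m.hom x = fgDesc R M t x
    conv_lhs => rw [h1]
    have := congr_fun (congr_arg (fun (f : (_ : ModuleCat.{u} R) ⟶ _) => (f.hom : _ → _)) (hm j))
      (⟨x, Submodule.mem_span_singleton_self x⟩ : ↥j.1)
    exact this
end FGColim


section QuotColim
variable (R : Type u) [Ring R] (M : Type u) [AddCommGroup M] [Module R M]
  (K : Submodule R M)

abbrev FGSubOf := {P : Submodule R M // P.FG ∧ P ≤ K}

instance : Nonempty (FGSubOf R M K) := ⟨⟨⊥, Submodule.fg_bot, bot_le⟩⟩

instance : IsDirected (FGSubOf R M K) (· ≤ ·) :=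
  ⟨fun a b => ⟨⟨a.1 ⊔ b.1, (a.2.1.sup b.2.1), sup_le a.2.2 b.2.2⟩,
    Subtype.coe_le_coe.1 le_sup_left, Subtype.coe_le_coe.1 le_sup_right⟩⟩

noncomputable def quotDiagram : FGSubOf R M K ⥤ ModuleCat.{u} R where
  obj j := ModuleCat.of R (M ⧸ j.1)
  map {j j'} f := ModuleCat.ofHom (Submodule.mapQ j.1 j'.1 LinearMap.id
    (fun x hx => leOfHom f hx))
  map_id j := by
    refine ModuleCat.hom_ext (Submodule.linearMap_qext _ ?_)
    refine LinearMap.ext fun x => ?_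
    rfl
  map_comp f g := by
    refine ModuleCat.hom_ext (Submodule.linearMap_qext _ ?_)
    refine LinearMap.ext fun x => ?_
    rfl

noncomputable def quotCocone : Cocone (quotDiagram R M K) where
  pt := ModuleCat.of R (M ⧸ K)
  ι := {
    app := fun j => ModuleCat.ofHom (Submodule.mapQ j.1 K LinearMap.id (fun x hx => j.2.2 hx))
    naturality := fun j j' f => by
      refine ModuleCat.hom_ext (Submodule.linearMap_qext _ ?_)
      refine LinearMap.ext fun x => ?_
      rfl }

variable {R M K}

noncomputable def qtapp (t : Cocone (quotDiagram R M K)) (j : FGSubOf R M K) :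
    (M ⧸ j.1) →ₗ[R] ↑t.pt := (t.ι.app j).hom

lemma quotCocone_key (t : Cocone (quotDiagram R M K)) (j j' : FGSubOf R M K) (hjj' : j ≤ j')
    (x : M) :
    qtapp t j (Submodule.Quotient.mk x) = qtapp t j' (Submodule.Quotient.mk x) := by
  have := congr_fun (congr_arg (fun (f : (_ : ModuleCat.{u} R) ⟶ _) => (f.hom : _ → _)) (t.w (homOfLE hjj')))
    (Submodule.Quotient.mk x : M ⧸ j.1)
  exact this.symm

variable (R M K) in
noncomputable def quotDesc (t : Cocone (quotDiagram R M K)) : (M ⧸ K) →ₗ[R] ↑t.pt := by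
  refine K.liftQ (LinearMap.comp (qtapp t ⟨⊥, Submodule.fg_bot, bot_le⟩)
    (Submodule.mkQ ⊥)) ?_
  intro x hx
  set j : FGSubOf R M K := ⟨Submodule.span R {x}, Submodule.fg_span_singleton x,
    (Submodule.span_le.2 (Set.singleton_subset_iff.2 hx))⟩
  simp only [LinearMap.mem_ker, LinearMap.comp_apply]
  have h1 : (Submodule.mkQ (⊥ : Submodule R M)) x = Submodule.Quotient.mk x := rfl
  rw [h1, quotCocone_key t ⟨⊥, Submodule.fg_bot, bot_le⟩ j (Subtype.coe_le_coe.1 bot_le) x]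
  have h2 : (Submodule.Quotient.mk x : M ⧸ j.1) = 0 :=
    (Submodule.Quotient.mk_eq_zero _).2 (Submodule.mem_span_singleton_self x)
  rw [h2, map_zero]

noncomputable def quotIsColimit : IsColimit (quotCocone R M K) where
  desc t := ModuleCat.ofHom (quotDesc R M K t)
  fac t j := by
    refine ModuleCat.hom_ext (Submodule.linearMap_qext _ (LinearMap.ext fun x => ?_))
    show quotDesc R M K t (((quotCocone R M K).ι.app j).hom ((Submodule.mkQ j.1) x))
      = qtapp t j (Submodule.Quotient.mk x)
    have h1 : ((quotCocone R M K).ι.app j).hom ((Submodule.mkQ j.1) x)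
        = (Submodule.Quotient.mk x : M ⧸ K) := rfl
    rw [h1]
    have h2 : quotDesc R M K t (Submodule.Quotient.mk x : M ⧸ K)
        = qtapp t ⟨⊥, Submodule.fg_bot, bot_le⟩ (Submodule.Quotient.mk x) := rfl
    rw [h2, quotCocone_key t ⟨⊥, Submodule.fg_bot, bot_le⟩ j (Subtype.coe_le_coe.1 bot_le) x]
  uniq t m hm := by
    refine ModuleCat.hom_ext (Submodule.linearMap_qext _ (LinearMap.ext fun x => ?_))
    set j0 : FGSubOf R M K := ⟨⊥, Submodule.fg_bot, bot_le⟩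
    have h1 : (Submodule.mkQ K) x
        = ((quotCocone R M K).ι.app j0).hom (Submodule.Quotient.mk x : M ⧸ (⊥ : Submodule R M)) := rfl
    show m.hom ((Submodule.mkQ K) x)
      = quotDesc R M K t ((Submodule.mkQ K) x)
    conv_lhs => rw [h1]
    have h2 := congr_fun (congr_arg (fun (f : (_ : ModuleCat.{u} R) ⟶ _) => (f.hom : _ → _)) (hm j0))
      (Submodule.Quotient.mk x : M ⧸ (⊥ : Submodule R M))
    exact h2
end QuotColim


section Swindle
variable {R : Type u} [Ring R]

/-- distribute a product codomain over Finsupp -/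
noncomputable def finsuppProdCod (α : Type*) (M N : Type u) [AddCommGroup M] [Module R M]
    [AddCommGroup N] [Module R N] :
    (α →₀ (M × N)) ≃ₗ[R] (α →₀ M) × (α →₀ N) := by
  refine LinearEquiv.ofLinear
    (LinearMap.prod (Finsupp.mapRange.linearMap (LinearMap.fst R M N))
      (Finsupp.mapRange.linearMap (LinearMap.snd R M N)))
    ((Finsupp.mapRange.linearMap (LinearMap.inl R M N)).comp (LinearMap.fst R _ _)
      + (Finsupp.mapRange.linearMap (LinearMap.inr R M N)).comp (LinearMap.snd R _ _)) ?_ ?_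
  · refine LinearMap.ext fun p => Prod.ext ?_ ?_ <;>
    · refine Finsupp.ext fun a => ?_
      simp [Finsupp.mapRange_apply]
  · refine Finsupp.lhom_ext fun a mn => ?_
    simp only [LinearMap.coe_comp, Function.comp_apply, LinearMap.add_apply,
      Finsupp.mapRange.linearMap_apply, LinearMap.prod_apply, Function.prod, LinearMap.id_coe, id_eq,
      Finsupp.mapRange_single, LinearMap.fst_apply, LinearMap.snd_apply, LinearMap.inl_apply,
      LinearMap.inr_apply, ← Finsupp.single_add, Prod.mk_add_mk, add_zero, zero_add]

/-- shift: `(ℕ →₀ X) ≃ (ℕ →₀ X) × X` -/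
noncomputable def natFinsuppShift (X : Type u) [AddCommGroup X] [Module R X] :
    (ℕ →₀ X) ≃ₗ[R] (ℕ →₀ X) × X :=
  (Finsupp.domLCongr (((Denumerable.eqv (Option ℕ)).symm.trans
      (Equiv.optionEquivSumPUnit ℕ)) : ℕ ≃ (ℕ ⊕ PUnit.{1}))).trans
    ((Finsupp.sumFinsuppLEquivProdFinsupp R).trans
      (LinearEquiv.prodCongr (LinearEquiv.refl R _)
        (Finsupp.LinearEquiv.finsuppUnique R X PUnit.{1})))

/-- the swindle equivalence: if `F ≃ P × Q` then `P × (ℕ →₀ F) ≃ ℕ →₀ F`. -/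
noncomputable def swindleEquiv (P Q F : Type u) [AddCommGroup P] [Module R P]
    [AddCommGroup Q] [Module R Q] [AddCommGroup F] [Module R F]
    (e : F ≃ₗ[R] P × Q) : (P × (ℕ →₀ F)) ≃ₗ[R] (ℕ →₀ F) := by
  -- P × ((ℕ→₀P) × P) × (ℕ→₀Q)) ≃ ((ℕ→₀P) × P) × (ℕ→₀Q) would need P×(ℕ→₀P)≃(ℕ→₀P)... 
  -- instead: P × (ℕ→₀F) ≃ P × ((ℕ→₀P)×P)×(ℕ→₀Q) ≃ ((P × (ℕ→₀P)) × P) × (ℕ→₀Q)? 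
  -- use shift.symm on (ℕ→₀P)×P first
  have d2 : (ℕ →₀ F) ≃ₗ[R] (ℕ →₀ P) × (ℕ →₀ Q) :=
    (Finsupp.mapRange.linearEquiv e).trans (finsuppProdCod ℕ P Q)
  have s1 : (P × (ℕ →₀ F)) ≃ₗ[R] (P × ((ℕ →₀ P) × (ℕ →₀ Q))) :=
    LinearEquiv.prodCongr (LinearEquiv.refl R P) d2
  have s2 : (P × ((ℕ →₀ P) × (ℕ →₀ Q))) ≃ₗ[R] ((P × (ℕ →₀ P)) × (ℕ →₀ Q)) :=
    (LinearEquiv.prodAssoc R P (ℕ →₀ P) (ℕ →₀ Q)).symm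
  have s3 : ((P × (ℕ →₀ P)) × (ℕ →₀ Q)) ≃ₗ[R] ((ℕ →₀ P) × (ℕ →₀ Q)) :=
    LinearEquiv.prodCongr ((LinearEquiv.prodComm R P (ℕ →₀ P)).trans
      (natFinsuppShift P).symm) (LinearEquiv.refl R _)
  exact s1.trans (s2.trans (s3.trans d2.symm))

/-- splitting from `Module.Projective`. -/
noncomputable def projSplit (P : Type u) [AddCommGroup P] [Module R P]
    (s : P →ₗ[R] (P →₀ R)) (hs : (Finsupp.linearCombination R id) ∘ₗ s = LinearMap.id) :
    (P →₀ R) ≃ₗ[R] P × ↥(LinearMap.ker (Finsupp.linearCombination R (id : P → P))) where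
  toFun f := (Finsupp.linearCombination R id f,
    ⟨f - s (Finsupp.linearCombination R id f), by
      simp only [LinearMap.mem_ker, map_sub]
      have : Finsupp.linearCombination R id (s (Finsupp.linearCombination R id f))
          = Finsupp.linearCombination R id f := LinearMap.congr_fun hs _
      rw [this, sub_self]⟩)
  map_add' f g := by
    refine Prod.ext (by simp) (Subtype.ext ?_)
    show f + g - s (Finsupp.linearCombination R id (f + g))
      = (f - s (Finsupp.linearCombination R id f)) + (g - s (Finsupp.linearCombination R id g))
    rw [map_add, map_add]
    abel
  map_smul' r f := by
    refine Prod.ext (by simp) (Subtype.ext ?_)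
    show r • f - s (Finsupp.linearCombination R id (r • f))
      = r • (f - s (Finsupp.linearCombination R id f))
    rw [map_smul, map_smul, smul_sub]
  invFun p := s p.1 + p.2.1
  left_inv f := by
    show s (Finsupp.linearCombination R id f) + (f - s (Finsupp.linearCombination R id f)) = f
    abel
  right_inv p := by
    have h1 : Finsupp.linearCombination R (id : P → P) (s p.1 + p.2.1)
        = p.1 := by
      rw [map_add]
      have e1 : Finsupp.linearCombination R (id : P → P) (s p.1) = p.1 :=
        LinearMap.congr_fun hs _
      have e2 : Finsupp.linearCombination R (id : P → P) p.2.1 = 0 := p.2.2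
      rw [e1, e2, add_zero]
    refine Prod.ext h1 (Subtype.ext ?_)
    show s p.1 + p.2.1 - s (Finsupp.linearCombination R id (s p.1 + p.2.1)) = p.2.1
    rw [h1]
    abel
end Swindle


section Res
variable {R : Type u} [Ring R] {S : Set (ModuleCat.{u} R)}
  (h23 : SatisfiesTwoOfThree R S) (hR : ModuleCat.of R R ∈ S)
  (hsub : ∀ M : ModuleCat.{u} R, Subsingleton M → M ∈ S)
  (hproj : ∀ X : ModuleCat.{u} R, Projective X → X ∈ S)

include h23 hR hsub hproj in
lemma res_mem (M : ModuleCat.{u} R) (P : ProjectiveResolution M) (n : ℕ)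
    (hn : ∀ i : ℕ, n ≤ i → Subsingleton (P.complex.X i)) : M ∈ S := by
  set rng : ℕ → ModuleCat.{u} R := fun i =>
    ModuleCat.of R ↥(LinearMap.range (P.complex.d (i+1) i).hom) with hrng
  -- downward induction
  have key : ∀ k i, n ≤ i + k → rng i ∈ S := by
    intro k
    induction k with
    | zero =>
      intro i hi
      refine hsub _ ?_
      have hsub1 : Subsingleton (P.complex.X (i+1)) := hn (i+1) (by omega)
      constructor
      rintro ⟨y, hy⟩ ⟨y', hy'⟩
      obtain ⟨x, rfl⟩ := hy
      obtain ⟨x', rfl⟩ := hy'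
      exact Subtype.ext (congr_arg (P.complex.d (i+1) i).hom (Subsingleton.elim x x'))
    | succ k ih =>
      intro i hi
      by_cases hcase : n ≤ i + k
      · exact ih i hcase
      -- i + k < n, so i < n; build exact sequence
      have hex := P.exact_succ i
      rw [ShortComplex.moduleCat_exact_iff] at hex
      refine (h23 (rng (i+1)) (P.complex.X (i+1)) (rng i)
        (LinearMap.range (P.complex.d (i+2) (i+1)).hom).subtype
        (LinearMap.rangeRestrict (P.complex.d (i+1) i).hom)
        (Submodule.injective_subtype _)
        (LinearMap.surjective_rangeRestrict _) ?_).1 (ih (i+1) (by omega)) (hproj _ inferInstance)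
      intro y
      constructor
      · intro hy
        have hy0 : (P.complex.d (i+1) i).hom y = 0 := by
          have := congr_arg (Subtype.val) hy
          exact this
        obtain ⟨x, hx⟩ := hex y hy0
        exact ⟨⟨(P.complex.d (i+2) (i+1)).hom x, ⟨x, rfl⟩⟩, hx⟩
      · rintro ⟨⟨z, ⟨x, rfl⟩⟩, rfl⟩
        refine Subtype.ext ?_
        show (P.complex.d (i+1) i).hom ((P.complex.d (i+2) (i+1)).hom x) = 0
        have := P.complex.d_comp_d (i+2) (i+1) i
        exact congr_fun (congr_arg (fun (f : (_ : ModuleCat.{u} R) ⟶ _) => (f.hom : _ → _)) this) x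
  -- now the final step with π
  have hepi : Function.Surjective (P.π.f 0).hom :=
    (ModuleCat.epi_iff_surjective _).1 inferInstance
  have hex0 := P.exact₀
  rw [ShortComplex.moduleCat_exact_iff] at hex0
  refine (h23 (rng 0) (P.complex.X 0) M
    (LinearMap.range (P.complex.d 1 0).hom).subtype
    (P.π.f 0).hom
    (Submodule.injective_subtype _) hepi ?_).1 (key n 0 (by omega)) (hproj _ inferInstance)
  intro y
  constructor
  · intro hy
    obtain ⟨x, hx⟩ := hex0 y hy
    exact ⟨⟨(P.complex.d 1 0).hom x, ⟨x, rfl⟩⟩, hx⟩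
  · rintro ⟨⟨z, ⟨x, rfl⟩⟩, rfl⟩
    show (P.π.f 0).hom ((P.complex.d 1 0).hom x) = 0
    have := P.complex_d_comp_π_f_zero
    exact congr_fun (congr_arg (fun (f : (_ : ModuleCat.{u} R) ⟶ _) => (f.hom : _ → _)) this) x
end Res


/-- if every finitely presented `R`-module has finite projective
(homological) dimension, then `R` is regular in the sense of Vogel. -/
theorem isVogelRegular_of_finitePresented_finite_projective_dimension
    (R : Type u) [Ring R]
    (h : ∀ M : ModuleCat.{u} R, Module.FinitePresentation R M →
      HasFiniteProjectiveResolution R M) :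
    IsVogelRegular R := by
  intro M S hSex hR
  obtain ⟨hstab, h23⟩ := hSex
  -- all (possibly infinite) free modules belong to S
  have hfree : ∀ ι : Type u, ModuleCat.of R (ι →₀ R) ∈ S := by
    intro ι
    refine hstab (Finset ι) inferInstance inferInstance (freeDiagram R ι) (freeCocone R ι)
      (freeIsColimit R ι) ?_
    intro s
    refine mem_of_equiv h23 hR (finfree_mem h23 hR s.card) ?_
    exact (LinearEquiv.funCongrLeft R R s.equivFin).trans
      (Finsupp.linearEquivFunOnFinite R R ↥s).symm
  -- all projective modules belong to S
  have hproj : ∀ X : ModuleCat.{u} R, CategoryTheory.Projective X → X ∈ S := by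
    intro X hX
    have hp : Module.Projective R X := (IsProjective.iff_projective (R := R) X).2 hX
    obtain ⟨s, hs⟩ := (Module.projective_def').1 hp
    set Q := LinearMap.ker (Finsupp.linearCombination R (id : X → X)) with hQ
    have e1 : (↥X →₀ R) ≃ₗ[R] ↥X × ↥Q := projSplit ↥X s hs
    have hA : ModuleCat.of R (ℕ →₀ (↥X →₀ R)) ∈ S :=
      mem_of_equiv h23 hR (hfree (ℕ × ↥X)) (Finsupp.finsuppProdLEquiv R)
    have hXA : ModuleCat.of R (↥X × (ℕ →₀ (↥X →₀ R))) ∈ S :=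
      mem_of_equiv h23 hR hA (swindleEquiv ↥X ↥Q (↥X →₀ R) e1).symm
    refine (h23 (ModuleCat.of R (ℕ →₀ (↥X →₀ R)))
      (ModuleCat.of R (↥X × (ℕ →₀ (↥X →₀ R)))) X
      (LinearMap.inr R ↥X (ℕ →₀ (↥X →₀ R)))
      (LinearMap.fst R ↥X (ℕ →₀ (↥X →₀ R))) ?_ ?_ ?_).1 hA hXA
    · intro a b hab
      exact congr_arg Prod.snd hab
    · intro y
      exact ⟨(y, 0), rfl⟩
    · exact Function.Exact.inr_fst
  have hsub : ∀ N : ModuleCat.{u} R, Subsingleton N → N ∈ S :=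
    fun N hN => subsingleton_mem h23 hR N hN
  -- all finitely presented modules belong to S
  have hfp : ∀ N : ModuleCat.{u} R, Module.FinitePresentation R N → N ∈ S := by
    intro N hN
    obtain ⟨P, n, hn⟩ := h N hN
    exact res_mem h23 hR hsub hproj N P n hn
  -- all finitely generated modules belong to S
  have hfg : ∀ N : ModuleCat.{u} R, Module.Finite R N → N ∈ S := by
    intro N hN
    obtain ⟨n, φ, hφ⟩ := Module.Finite.exists_fin' R N
    set K := LinearMap.ker φ with hK
    have hquot : ModuleCat.of R ((Fin n → R) ⧸ K) ∈ S := by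
      refine hstab (FGSubOf R (Fin n → R) K) inferInstance inferInstance
        (quotDiagram R (Fin n → R) K) (quotCocone R (Fin n → R) K)
        (quotIsColimit) ?_
      intro j
      refine hfp (ModuleCat.of R ((Fin n → R) ⧸ j.1)) ?_
      refine Module.finitePresentation_of_surjective j.1.mkQ
        (Submodule.mkQ_surjective j.1) ?_
      rw [Submodule.ker_mkQ]
      exact j.2.1
    exact mem_of_equiv h23 hR hquot (LinearMap.quotKerEquivOfSurjective φ hφ)
  -- finally, every module is a filtered colimit of its finitely generated submodules
  refine hstab (FGSub R ↥M) inferInstance inferInstance (fgDiagram R ↥M) (fgCocone R ↥M)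
    (fgIsColimit) ?_
  intro j
  exact hfg (ModuleCat.of R ↥j.1) (Module.Finite.iff_fg.2 j.2)
end

section
/- The ring ℤ/4ℤ is not regular in the sense of Vogel: the class of all free ℤ/4ℤ-modules is an exact class containing ℤ/4ℤ, and it does not contain the module ℤ/2ℤ; in particular the ℤ/4ℤ-module ℤ/2ℤ is not regular. -/
universe u

open CategoryTheory CategoryTheory.Limits

namespace Zmod4Aux

/-- The key condition: every 2-torsion element is divisible by 2. -/
def Cond (M : Type*) [AddCommGroup M] [Module (ZMod 4) M] : Prop :=
  ∀ x : M, (2 : ZMod 4) • x = 0 → ∃ y : M, x = (2 : ZMod 4) • y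

def lft (t : ZMod 2) : ZMod 4 := if t = 0 then 0 else 1

lemma lft_zero : lft 0 = 0 := by decide

lemma cast_lft : ∀ t : ZMod 2, (ZMod.cast (lft t) : ZMod 2) = t := by decide

lemma cast_lft_zero : (ZMod.cast (lft 0) : ZMod 2) = 0 := by decide

def hlf (t : ZMod 4) : ZMod 4 := if t = 2 then 1 else 0

lemma hlf_zero : hlf 0 = 0 := by decide

lemma half_spec : ∀ t : ZMod 4, 2 * t = 0 → 2 * hlf t = t := by decide

lemma cast_zero_two_mul : ∀ t : ZMod 4, (ZMod.cast t : ZMod 2) = 0 → 2 * t = 0 := by decide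

lemma final_lemma : ∀ t : ZMod 4, (ZMod.cast t : ZMod 2) = 0 →
    (ZMod.cast (hlf t) : ZMod 2) = 0 → t = 0 := by decide

lemma two_mul_two : (2 * 2 : ZMod 4) = 0 := by decide

lemma cond_of_free (M : Type*) [AddCommGroup M] [Module (ZMod 4) M]
    [Module.Free (ZMod 4) M] : Cond M := by
  classical
  let b := Module.Free.chooseBasis (ZMod 4) M
  intro x hx
  set c := b.repr x with hc
  have h2c : ∀ i, 2 * c i = 0 := by
    intro i
    have h : (2 : ZMod 4) • c = 0 := by rw [hc, ← map_smul, hx, map_zero]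
    have := DFunLike.congr_fun h i
    simpa [Finsupp.smul_apply, smul_eq_mul] using this
  refine ⟨b.repr.symm (c.mapRange hlf hlf_zero), ?_⟩
  apply b.repr.injective
  rw [map_smul, LinearEquiv.apply_symm_apply]
  ext i
  simp only [Finsupp.smul_apply, Finsupp.mapRange_apply, smul_eq_mul, ← hc]
  exact (half_spec _ (h2c i)).symm

lemma free_of_cond (M : Type*) [AddCommGroup M] [Module (ZMod 4) M] (hM : Cond M) :
    Module.Free (ZMod 4) M := by
  classical
  set N : Submodule (ZMod 4) M :=
    LinearMap.range ((2 : ZMod 4) • (LinearMap.id : M →ₗ[ZMod 4] M)) with hNdef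
  have memN : ∀ m : M, m ∈ N ↔ ∃ y : M, (2 : ZMod 4) • y = m := by
    intro m
    constructor
    · rintro ⟨y, hy⟩; exact ⟨y, hy⟩
    · rintro ⟨y, hy⟩; exact ⟨y, hy⟩
  have hπ : ∀ m : M, N.mkQ ((2 : ZMod 4) • m) = 0 := fun m =>
    (Submodule.Quotient.mk_eq_zero N).2 ((memN _).2 ⟨m, rfl⟩)
  have h2Q : ∀ q : M ⧸ N, (2 : ZMod 4) • q = 0 := by
    intro q
    obtain ⟨m, rfl⟩ := N.mkQ_surjective q
    rw [← map_smul]; exact hπ m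
  have h2Qn : ∀ q : M ⧸ N, 2 • q = 0 := by
    intro q
    have := h2Q q
    rwa [show ((2 : ZMod 4)) = ((2 : ℕ) : ZMod 4) by norm_num,
      Nat.cast_smul_eq_nsmul] at this
  letI : Module (ZMod 2) (M ⧸ N) := AddCommGroup.zmodModule h2Qn
  have compat : ∀ (a : ZMod 4) (q : M ⧸ N),
      a • q = (ZMod.cast a : ZMod 2) • q := by
    have c4 : ∀ a : ZMod 4, a = 0 ∨ a = 1 ∨ a = 2 ∨ a = 3 := by decide
    intro a q
    rcases c4 a with rfl | rfl | rfl | rfl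
    · rw [show (ZMod.cast (0 : ZMod 4) : ZMod 2) = 0 by decide, zero_smul, zero_smul]
    · rw [show (ZMod.cast (1 : ZMod 4) : ZMod 2) = 1 by decide, one_smul, one_smul]
    · rw [show (ZMod.cast (2 : ZMod 4) : ZMod 2) = 0 by decide, zero_smul, h2Q]
    · rw [show (ZMod.cast (3 : ZMod 4) : ZMod 2) = 1 by decide, one_smul,
        show (3 : ZMod 4) = 1 + 2 by decide, add_smul, one_smul, h2Q, add_zero]
  haveI : Fact (Nat.Prime 2) := ⟨by norm_num⟩
  set b := Module.Basis.ofVectorSpace (ZMod 2) (M ⧸ N) with hb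
  choose σ hσ using N.mkQ_surjective
  set x : Module.Basis.ofVectorSpaceIndex (ZMod 2) (M ⧸ N) → M := fun i => σ (b i) with hxdef
  have hπx : ∀ i, N.mkQ (x i) = b i := fun i => hσ (b i)
  have cz : (ZMod.cast (0 : ZMod 4) : ZMod 2) = 0 := ZMod.cast_zero
  -- key computation
  have keyπ : ∀ e : _ →₀ ZMod 4,
      N.mkQ (Finsupp.linearCombination (ZMod 4) x e) =
        Finsupp.linearCombination (ZMod 2) (⇑b) (e.mapRange ZMod.cast cz) := by
    intro e
    rw [Finsupp.linearCombination_apply, Finsupp.linearCombination_apply,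
      map_finsuppSum]
    have e1 : (Finsupp.mapRange ZMod.cast cz e).sum (fun i (t : ZMod 2) => t • b i)
        = e.sum (fun i (t : ZMod 4) => (ZMod.cast t : ZMod 2) • b i) :=
      Finsupp.sum_mapRange_index fun i => zero_smul _ _
    rw [e1]
    refine Finsupp.sum_congr fun i _ => ?_
    rw [map_smul, hπx, compat]
  have hbli : ∀ l, Finsupp.linearCombination (ZMod 2) (⇑b) l = 0 → l = 0 :=
    linearIndependent_iff.1 b.linearIndependent
  have hli : LinearIndependent (ZMod 4) x := by
    rw [linearIndependent_iff]
    intro l hl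
    have h1 : ∀ i, (ZMod.cast (l i) : ZMod 2) = 0 := by
      intro i
      have hA := hbli _ (by rw [← keyπ, hl, map_zero])
      have := DFunLike.congr_fun hA i
      simpa [Finsupp.mapRange_apply] using this
    have h2l : ∀ i, 2 * l i = 0 := fun i => cast_zero_two_mul _ (h1 i)
    set d := l.mapRange hlf hlf_zero with hd
    have h2d : (2 : ZMod 4) • d = l := by
      ext i
      simp only [hd, Finsupp.smul_apply, Finsupp.mapRange_apply, smul_eq_mul]
      exact half_spec _ (h2l i)
    have hs : (2 : ZMod 4) • Finsupp.linearCombination (ZMod 4) x d = 0 := by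
      rw [← map_smul, h2d, hl]
    obtain ⟨y, hy⟩ := hM _ hs
    have hπs : N.mkQ (Finsupp.linearCombination (ZMod 4) x d) = 0 := by
      rw [hy]; exact hπ y
    have hB := hbli _ (by rw [← keyπ, hπs])
    have h3 : ∀ i, (ZMod.cast (hlf (l i)) : ZMod 2) = 0 := by
      intro i
      have := DFunLike.congr_fun hB i
      simpa [hd, Finsupp.mapRange_apply] using this
    ext i
    exact final_lemma _ (h1 i) (h3 i)
  have step : ∀ m : M, ∃ m₁ ∈ Submodule.span (ZMod 4) (Set.range x),
      ∃ u : M, m = m₁ + (2 : ZMod 4) • u := by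
    intro m
    have hm : N.mkQ m ∈ Submodule.span (ZMod 2) (Set.range (⇑b)) := by
      rw [b.span_eq]; trivial
    rw [Finsupp.mem_span_range_iff_exists_finsupp] at hm
    obtain ⟨cc, hcc⟩ := hm
    set c' := cc.mapRange lft lft_zero with hc'
    set m₁ := Finsupp.linearCombination (ZMod 4) x c' with hm₁
    have hmem : m₁ ∈ Submodule.span (ZMod 4) (Set.range x) := by
      rw [hm₁, Finsupp.linearCombination_apply]
      exact Submodule.sum_mem _ fun i _ =>
        Submodule.smul_mem _ _ (Submodule.subset_span ⟨i, rfl⟩)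
    have hπm₁ : N.mkQ m₁ = N.mkQ m := by
      rw [hm₁, keyπ, ← hcc, Finsupp.linearCombination_apply]
      have e1 : (Finsupp.mapRange ZMod.cast cz c').sum (fun i (t : ZMod 2) => t • b i)
          = c'.sum (fun i (t : ZMod 4) => (ZMod.cast t : ZMod 2) • b i) :=
        Finsupp.sum_mapRange_index fun i => zero_smul _ _
      have e2 : c'.sum (fun i (t : ZMod 4) => (ZMod.cast t : ZMod 2) • b i)
          = cc.sum (fun i (t : ZMod 2) => (ZMod.cast (lft t) : ZMod 2) • b i) := by
        rw [hc']
        exact Finsupp.sum_mapRange_index fun i => by rw [ZMod.cast_zero, zero_smul]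
      rw [e1, e2]
      exact Finsupp.sum_congr fun i _ => by rw [cast_lft]
    have hsub : m₁ - m ∈ N := by
      rw [← Submodule.Quotient.eq N]
      exact hπm₁
    obtain ⟨u, hu⟩ := (memN _).1 hsub
    refine ⟨m₁, hmem, -u, ?_⟩
    rw [smul_neg, hu]
    abel
  have hspan : ⊤ ≤ Submodule.span (ZMod 4) (Set.range x) := by
    intro m _
    obtain ⟨m₁, hm₁, u, rfl⟩ := step m
    obtain ⟨m₂, hm₂, w, rfl⟩ := step u
    have h4 : (2 : ZMod 4) • (m₂ + (2 : ZMod 4) • w) = (2 : ZMod 4) • m₂ := by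
      rw [smul_add, smul_smul, two_mul_two, zero_smul, add_zero]
    rw [h4]
    exact Submodule.add_mem _ hm₁ (Submodule.smul_mem _ _ hm₂)
  exact Module.Free.of_basis (Module.Basis.mk hli hspan)

lemma cond_two_of_three {M N P : Type*}
    [AddCommGroup M] [Module (ZMod 4) M] [AddCommGroup N] [Module (ZMod 4) N]
    [AddCommGroup P] [Module (ZMod 4) P]
    (f : M →ₗ[ZMod 4] N) (g : N →ₗ[ZMod 4] P)
    (hf : Function.Injective f) (hg : Function.Surjective g)
    (hfg : Function.Exact f g) :
    (Cond M → Cond N → Cond P) ∧ (Cond M → Cond P → Cond N) ∧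
      (Cond N → Cond P → Cond M) := by
  have h22 : ∀ (A : Type _) [AddCommGroup A] [Module (ZMod 4) A] (a : A),
      (2 : ZMod 4) • (2 : ZMod 4) • a = 0 := by
    intro A _ _ a
    rw [smul_smul, two_mul_two, zero_smul]
  refine ⟨?_, ?_, ?_⟩
  · -- M, N cond → P cond
    intro cM cN p hp
    obtain ⟨n, rfl⟩ := hg p
    have h2n : g ((2 : ZMod 4) • n) = 0 := by rw [map_smul, hp]
    obtain ⟨m, hm⟩ := (hfg _).1 h2n
    have h2m : (2 : ZMod 4) • m = 0 := by
      apply hf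
      rw [map_smul, hm, map_zero, h22]
    obtain ⟨m', hm'⟩ := cM m h2m
    have hnm : (2 : ZMod 4) • (n - f m') = 0 := by
      rw [smul_sub, ← map_smul, ← hm', hm, sub_self]
    obtain ⟨n', hn'⟩ := cN _ hnm
    refine ⟨g n', ?_⟩
    have : g (f m') = 0 := (hfg (f m')).2 ⟨m', rfl⟩
    calc g n = g (n - f m') + g (f m') := by rw [map_sub, this, add_zero, sub_zero]
    _ = (2 : ZMod 4) • g n' := by rw [this, add_zero, hn', map_smul]
  · -- M, P cond → N cond
    intro cM cP n hn
    have : (2 : ZMod 4) • g n = 0 := by rw [← map_smul, hn, map_zero]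
    obtain ⟨p', hp'⟩ := cP _ this
    obtain ⟨n₀, hn₀⟩ := hg p'
    have hker : g (n - (2 : ZMod 4) • n₀) = 0 := by
      rw [map_sub, map_smul, hn₀, ← hp', sub_self]
    obtain ⟨m, hm⟩ := (hfg _).1 hker
    have h2m : (2 : ZMod 4) • m = 0 := by
      apply hf
      rw [map_smul, hm, map_zero, smul_sub, hn, zero_sub, h22, neg_zero]
    obtain ⟨m', hm'⟩ := cM m h2m
    refine ⟨n₀ + f m', ?_⟩
    have : n = (2 : ZMod 4) • n₀ + f m := by rw [hm]; abel
    rw [this, hm', map_smul, smul_add]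
  · -- N, P cond → M cond
    intro cN cP m hm
    have h2fm : (2 : ZMod 4) • f m = 0 := by rw [← map_smul, hm, map_zero]
    obtain ⟨n, hn⟩ := cN _ h2fm
    have h2gn : (2 : ZMod 4) • g n = 0 := by
      have : g (f m) = 0 := (hfg (f m)).2 ⟨m, rfl⟩
      rw [← map_smul, ← hn, this]
    obtain ⟨p₁, hp₁⟩ := cP _ h2gn
    obtain ⟨n₁, hn₁⟩ := hg p₁
    have hker : g (n - (2 : ZMod 4) • n₁) = 0 := by
      rw [map_sub, map_smul, hn₁, ← hp₁, sub_self]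
    obtain ⟨m₁, hm₁⟩ := (hfg _).1 hker
    refine ⟨m₁, hf ?_⟩
    rw [hn, map_smul, hm₁, smul_sub, h22, sub_zero]

end Zmod4Aux

/-- `ℤ/2ℤ` as a `ℤ/4ℤ`-module, via the canonical surjection `ℤ/4ℤ → ℤ/2ℤ`. -/
noncomputable instance : Module (ZMod 4) (ZMod 2) :=
  (ZMod.castHom (by norm_num : (2 : ℕ) ∣ 4) (ZMod 2)).toModule

/-- the ring `ℤ/4ℤ` is not regular in the sense of Vogel: the class of
all free `ℤ/4ℤ`-modules is an exact class containing `ℤ/4ℤ` that does not contain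
`ℤ/2ℤ`; in particular the `ℤ/4ℤ`-module `ℤ/2ℤ` is not regular. -/
theorem zmod4_not_vogelRegular :
    IsExactClass (ZMod 4) {M : ModuleCat (ZMod 4) | Module.Free (ZMod 4) M} ∧
    ModuleCat.of (ZMod 4) (ZMod 4) ∈ {M : ModuleCat (ZMod 4) | Module.Free (ZMod 4) M} ∧
    ModuleCat.of (ZMod 4) (ZMod 2) ∉ {M : ModuleCat (ZMod 4) | Module.Free (ZMod 4) M} ∧
    ¬ IsRegularModule (ZMod 4) (ModuleCat.of (ZMod 4) (ZMod 2)) ∧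
    ¬ IsVogelRegular (ZMod 4) := by
  classical
  open Zmod4Aux in
  have smul2 : ∀ y : ZMod 2, (2 : ZMod 4) • y = 0 := by
    intro y
    show (ZMod.castHom (by norm_num : (2 : ℕ) ∣ 4) (ZMod 2)) 2 * y = 0
    rw [show ((ZMod.castHom (by norm_num : (2 : ℕ) ∣ 4) (ZMod 2))) 2 = 0 by decide,
      zero_mul]
  have notfree : ModuleCat.of (ZMod 4) (ZMod 2) ∉
      {M : ModuleCat (ZMod 4) | Module.Free (ZMod 4) M} := by
    intro h
    haveI : Module.Free (ZMod 4) (ZMod 2) := h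
    obtain ⟨y, hy⟩ := cond_of_free (ZMod 2) (1 : ZMod 2) (smul2 1)
    rw [smul2 y] at hy
    exact one_ne_zero hy
  have hstable : StableUnderFilteredColimits (ZMod 4)
      {M : ModuleCat (ZMod 4) | Module.Free (ZMod 4) M} := by
    intro J hJ hfil F c hc hobj
    letI := hJ; letI := hfil
    haveI : PreservesColimit F (forget (ModuleCat (ZMod 4))) := inferInstance
    show Module.Free (ZMod 4) c.pt
    refine free_of_cond _ ?_
    intro xx hx
    obtain ⟨j, y, rfl⟩ := Concrete.isColimit_exists_rep F hc xx
    have h0 : c.ι.app j ((2 : ZMod 4) • y) = c.ι.app j 0 := by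
      rw [map_smul, map_zero]; exact hx
    obtain ⟨k, φ, ψ, hφψ⟩ := Concrete.isColimit_exists_of_rep_eq F hc _ _ h0
    rw [map_zero] at hφψ
    haveI : Module.Free (ZMod 4) (F.obj k) := hobj k
    have h2z : (2 : ZMod 4) • (F.map φ y) = 0 := by rw [← map_smul]; exact hφψ
    obtain ⟨w, hw⟩ := cond_of_free (F.obj k) _ h2z
    refine ⟨c.ι.app k w, ?_⟩
    have hnat := c.w φ
    have h1 : c.ι.app j y = c.ι.app k (F.map φ y) :=
      (ConcreteCategory.congr_hom hnat y).symm
    have h2 : c.ι.app k (F.map φ y) = (2 : ZMod 4) • c.ι.app k w := by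
      rw [hw, map_smul]
    exact h1.trans h2
  have h23 : SatisfiesTwoOfThree (ZMod 4)
      {M : ModuleCat (ZMod 4) | Module.Free (ZMod 4) M} := by
    intro Mo No Po f g hf hg hfg
    obtain ⟨c1, c2, c3⟩ := cond_two_of_three f g hf hg hfg
    refine ⟨?_, ?_, ?_⟩
    · intro hM hN
      haveI : Module.Free (ZMod 4) Mo := hM
      haveI : Module.Free (ZMod 4) No := hN
      exact free_of_cond _ (c1 (cond_of_free _) (cond_of_free _))
    · intro hM hP
      haveI : Module.Free (ZMod 4) Mo := hM
      haveI : Module.Free (ZMod 4) Po := hP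
      exact free_of_cond _ (c2 (cond_of_free _) (cond_of_free _))
    · intro hN hP
      haveI : Module.Free (ZMod 4) No := hN
      haveI : Module.Free (ZMod 4) Po := hP
      exact free_of_cond _ (c3 (cond_of_free _) (cond_of_free _))
  have hexact : IsExactClass (ZMod 4) {M : ModuleCat (ZMod 4) | Module.Free (ZMod 4) M} :=
    ⟨hstable, h23⟩
  have hself : ModuleCat.of (ZMod 4) (ZMod 4) ∈
      {M : ModuleCat (ZMod 4) | Module.Free (ZMod 4) M} :=
    inferInstanceAs (Module.Free (ZMod 4) (ZMod 4))
  have hnotreg : ¬ IsRegularModule (ZMod 4) (ModuleCat.of (ZMod 4) (ZMod 2)) :=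
    fun h => notfree (h _ hexact hself)
  exact ⟨hexact, hself, notfree, hnotreg, fun h => hnotreg (h _)⟩
end

section
/- Let f : A → B be a ring homomorphism. Suppose that A is isomorphic to a direct summand of B as an A-bimodule, and that B is flat as a right A-module. If B is right regular (in the sense of Vogel), then A is right regular too. -/
universe u

open CategoryTheory CategoryTheory.Limits

section AuxiliaryLemmas

variable {R : Type u} [Ring R]

lemma zero_mem_of_mem {S : Set (ModuleCat.{u} R)} (h23 : SatisfiesTwoOfThree R S)
    {M : ModuleCat.{u} R} (hM : M ∈ S) : ModuleCat.of R (Fin 0 → R) ∈ S := by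
  refine (h23 M M (ModuleCat.of R (Fin 0 → R)) LinearMap.id 0 (fun _ _ h => h)
    (fun x => ⟨0, Subsingleton.elim _ _⟩) ?_).1 hM hM
  intro y
  simp [Subsingleton.elim ((0 : M →ₗ[R] (Fin 0 → R)) y) 0]
  exact Subsingleton.elim _ _

lemma mem_of_linearEquiv {S : Set (ModuleCat.{u} R)} (h23 : SatisfiesTwoOfThree R S)
    {M N : ModuleCat.{u} R} (e : M ≃ₗ[R] N) (hM : M ∈ S) : N ∈ S := by
  refine (h23 M N (ModuleCat.of R (Fin 0 → R)) e.toLinearMap 0 e.injective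
    (fun x => ⟨0, Subsingleton.elim _ _⟩) ?_).2.1 hM (zero_mem_of_mem h23 hM)
  intro y
  constructor
  · intro _; exact ⟨e.symm y, e.apply_symm_apply y⟩
  · intro _; exact Subsingleton.elim _ _

lemma mem_of_retract {S : Set (ModuleCat.{u} R)} (hcolim : StableUnderFilteredColimits R S)
    {M N : ModuleCat.{u} R} (r : N →ₗ[R] M) (s : M →ₗ[R] N) (hrs : ∀ m, r (s m) = m)
    (hN : N ∈ S) : M ∈ S := by
  classical
  set e : N →ₗ[R] N := s.comp r with he_def
  have hee : e.comp e = e := by ext x; simp [he_def, hrs]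
  have hre : r.comp e = r := by ext x; simp [he_def, hrs]
  have hee' : ∀ x, e (e x) = e x := fun x => LinearMap.congr_fun hee x
  letI instJ : SmallCategory (ULift.{u} ℕ) := Preorder.smallCategory _
  haveI fJ : IsFiltered (ULift.{u} ℕ) := IsFiltered.mk
  let F : ULift.{u} ℕ ⥤ ModuleCat.{u} R :=
    { obj := fun _ => N
      map := fun {j j'} _ => if j.down = j'.down then 𝟙 N else ModuleCat.ofHom e
      map_id := fun j => if_pos rfl
      map_comp := fun {a b c} h1 h2 => by
        have hab : a ≤ b := leOfHom h1
        have hbc : b ≤ c := leOfHom h2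
        have hab' : a.down ≤ b.down := hab
        have hbc' : b.down ≤ c.down := hbc
        show (if a.down = c.down then 𝟙 N else ModuleCat.ofHom e)
          = (if a.down = b.down then 𝟙 N else ModuleCat.ofHom e)
            ≫ (if b.down = c.down then 𝟙 N else ModuleCat.ofHom e)
        split_ifs with h h' h'' <;>
          first
          | (exfalso; omega)
          | (ext x; simp [hee']) }
  have hFmap : ∀ (j j' : ULift.{u} ℕ) (h : j ⟶ j'), j.down ≠ j'.down → F.map h = ModuleCat.ofHom e := by
    intro j j' h hne
    show (if j.down = j'.down then 𝟙 N else ModuleCat.ofHom e) = ModuleCat.ofHom e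
    rw [if_neg hne]
  let c : Cocone F :=
    { pt := M
      ι := { app := fun _ => ModuleCat.ofHom r
             naturality := fun j j' h => by
               simp only [Functor.const_obj_map, Category.comp_id]
               show (if j.down = j'.down then 𝟙 N else ModuleCat.ofHom e) ≫ ModuleCat.ofHom r
                 = ModuleCat.ofHom r
               by_cases hjj : j.down = j'.down
               · rw [if_pos hjj, Category.id_comp]
               · rw [if_neg hjj]; ext x; simp [he_def, hrs] } }
  have key : ∀ (t : Cocone F) (j j' : ULift.{u} ℕ) (h : j.down < j'.down),
      LinearMap.comp (t.ι.app j').hom e = (t.ι.app j).hom := by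
    intro t j j' h
    have hw := t.w (homOfLE (show j ≤ j' from le_of_lt h))
    rw [hFmap _ _ _ (Nat.ne_of_lt h)] at hw
    exact congrArg ModuleCat.Hom.hom hw
  have hconst : ∀ (t : Cocone F) (j : ULift.{u} ℕ), (t.ι.app j).hom = (t.ι.app ⟨0⟩).hom := by
    intro t j
    rw [← key t j ⟨j.down + 1⟩ (Nat.lt_succ_self _), ← key t ⟨0⟩ ⟨j.down + 1⟩ (Nat.succ_pos _)]
  have happ_e : ∀ (t : Cocone F), LinearMap.comp (t.ι.app ⟨0⟩).hom e = (t.ι.app ⟨0⟩).hom := by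
    intro t
    have h1 := key t ⟨0⟩ ⟨1⟩ (Nat.lt_succ_self 0)
    calc LinearMap.comp (t.ι.app ⟨0⟩).hom e
        = LinearMap.comp (LinearMap.comp (t.ι.app ⟨1⟩).hom e) e := by rw [h1]
      _ = LinearMap.comp (t.ι.app ⟨1⟩).hom e := by rw [LinearMap.comp_assoc, hee]
      _ = (t.ι.app ⟨0⟩).hom := h1
  let hc : IsColimit c :=
    { desc := fun t => ModuleCat.ofHom (LinearMap.comp (t.ι.app ⟨0⟩).hom s)
      fac := fun t j => by
        apply ModuleCat.hom_ext
        show LinearMap.comp (LinearMap.comp (t.ι.app ⟨0⟩).hom s) r = (t.ι.app j).hom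
        rw [LinearMap.comp_assoc]
        show LinearMap.comp (t.ι.app ⟨0⟩).hom e = _
        rw [happ_e t, hconst t j]
      uniq := fun t m hm => by
        have h0 := hm ⟨0⟩
        apply ModuleCat.hom_ext
        show m.hom = LinearMap.comp (t.ι.app ⟨0⟩).hom s
        ext x
        have hx : (t.ι.app ⟨0⟩).hom (s x) = m.hom (r (s x)) := by rw [← h0]; rfl
        show m.hom x = (t.ι.app ⟨0⟩).hom (s x)
        rw [hx, hrs]
      }
  exact hcolim (ULift.{u} ℕ) instJ fJ F c hc fun _ => hN

lemma finFree_mem {S : Set (ModuleCat.{u} R)} (h23 : SatisfiesTwoOfThree R S)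
    (hR : ModuleCat.of R R ∈ S) : ∀ n, ModuleCat.of R (Fin n → R) ∈ S := by
  intro n
  induction n with
  | zero => exact zero_mem_of_mem h23 hR
  | succ n ih =>
    let fmap : (ModuleCat.of R R) →ₗ[R] (ModuleCat.of R (Fin (n+1) → R)) :=
      LinearMap.single R (fun _ : Fin (n+1) => R) 0
    let gmap : (ModuleCat.of R (Fin (n+1) → R)) →ₗ[R] (ModuleCat.of R (Fin n → R)) :=
      LinearMap.funLeft R R Fin.succ
    have hfm : ∀ (c : R), fmap c = Pi.single (0 : Fin (n+1)) c := by
      intro c; rfl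
    have hinj : Function.Injective fmap := by
      intro x y h
      simpa [fmap] using congrFun h 0
    have hsurj : Function.Surjective gmap := by
      intro v
      refine ⟨Fin.cases 0 v, ?_⟩
      funext k
      show (Fin.cases 0 v : ∀ _ : Fin (n+1), R) k.succ = v k
      simp
    have hexact : Function.Exact fmap gmap := by
      intro y
      constructor
      · intro h
        refine ⟨y 0, ?_⟩
        funext k
        refine Fin.cases ?_ ?_ k
        · rw [hfm]; simp
        · intro k'
          have := congrFun h k'
          have hthis : y k'.succ = 0 := this
          rw [hfm, Pi.single_eq_of_ne (Fin.succ_ne_zero k'), hthis]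
      · rintro ⟨c, rfl⟩
        funext k
        show fmap c k.succ = (0 : Fin n → R) k
        rw [hfm, Pi.single_eq_of_ne (Fin.succ_ne_zero k)]
        rfl
    exact (h23 _ _ _ fmap gmap hinj hsurj hexact).2.1 hR ih

end AuxiliaryLemmas

/-- let `f : A → B` be a ring homomorphism such that `A` is a direct
summand of `B` as an `A`-bimodule (witnessed by a bimodule inclusion `i` and a
bimodule retraction `p`), and such that `B` is flat as a right `A`-module
(i.e. as a left `Aᵐᵒᵖ`-module, for the action `aᵒᵖ • b = b * f a`).
If `B` is right regular in the sense of Vogel, then so is `A`. -/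
theorem isVogelRightRegular_of_bimodule_summand
    (A B : Type u) [Ring A] [Ring B] (f : A →+* B)
    (i : A →+ B) (p : B →+ A)
    (hi : ∀ a x a' : A, i (a * x * a') = f a * i x * f a')
    (hp : ∀ (a : A) (y : B) (a' : A), p (f a * y * f a') = a * p y * a')
    (hpi : ∀ x : A, p (i x) = x)
    (hflat : @IsLazardFlat Aᵐᵒᵖ _ B _ (Module.compHom B (RingHom.op f)))
    (hB : IsVogelRightRegular B) :
    IsVogelRightRegular A := by
  intro M S hS hA
  obtain ⟨hcolim, h23⟩ := hS
  letI mB : Module Aᵐᵒᵖ B := Module.compHom B (RingHom.op f)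
  set g : Aᵐᵒᵖ →+* Bᵐᵒᵖ := RingHom.op f with hg
  -- basic identities
  have hf1 : f 1 = 1 := map_one f
  have hi1 : ∀ a : A, f a * i 1 = i a := by
    intro a; have := hi a 1 1; simpa [hf1] using this.symm
  have hi2 : ∀ a : A, i 1 * f a = i a := by
    intro a; have := hi 1 1 a; simpa [hf1] using this.symm
  have hp1 : ∀ (y : B) (a : A), p (y * f a) = p y * a := by
    intro y a; have := hp 1 y a; simpa [hf1] using this
  have hp2 : ∀ (a : A) (y : B), p (f a * y) = a * p y := by
    intro a y; have := hp a y 1; simpa [hf1] using this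
  -- Step 1: finite free modules are in S
  have hfree : ∀ n, ModuleCat.of Aᵐᵒᵖ (Fin n → Aᵐᵒᵖ) ∈ S := finFree_mem h23 hA
  -- Step 2 : B (as right A-module) is in S
  obtain ⟨J, cJ, fJ, F, c, hc, hobj, ⟨eB⟩⟩ := hflat
  have hBmem : (ModuleCat.of Aᵐᵒᵖ B : ModuleCat.{u} Aᵐᵒᵖ) ∈ S := by
    have hpt : c.pt ∈ S := hcolim J cJ fJ F c hc (fun j => by
      obtain ⟨n, ⟨e⟩⟩ := hobj j
      exact mem_of_linearEquiv h23 (M := ModuleCat.of Aᵐᵒᵖ (Fin n → Aᵐᵒᵖ)) e.symm (hfree n))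
    exact mem_of_linearEquiv h23 (N := ModuleCat.of Aᵐᵒᵖ B) eB hpt
  have hBres : (ModuleCat.restrictScalars g).obj (ModuleCat.of Bᵐᵒᵖ Bᵐᵒᵖ) ∈ S := by
    refine mem_of_linearEquiv h23 (M := ModuleCat.of Aᵐᵒᵖ B)
      (N := (ModuleCat.restrictScalars g).obj (ModuleCat.of Bᵐᵒᵖ Bᵐᵒᵖ)) ?_ hBmem
    exact { toFun := MulOpposite.op
            invFun := MulOpposite.unop
            left_inv := fun _ => rfl
            right_inv := fun _ => rfl
            map_add' := fun _ _ => rfl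
            map_smul' := fun a b => rfl }
  -- Step 3: the class T of B-modules whose restriction lies in S is exact
  set T : Set (ModuleCat.{u} Bᵐᵒᵖ) := {N | (ModuleCat.restrictScalars g).obj N ∈ S} with hTdef
  haveI : PreservesColimitsOfSize.{u, u} (ModuleCat.restrictScalars.{u} g) :=
    (ModuleCat.restrictCoextendScalarsAdj g).leftAdjoint_preservesColimits
  have hTexact : IsExactClass Bᵐᵒᵖ T := by
    constructor
    · intro J' cJ' fJ' F' c' hc' hobj'
      exact hcolim J' cJ' fJ' (F' ⋙ ModuleCat.restrictScalars g)
        ((ModuleCat.restrictScalars g).mapCocone c')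
        (isColimitOfPreserves _ hc') hobj'
    · intro M' N' P' φ ψ hinj hsurj hexact
      exact h23 _ _ _ ((ModuleCat.restrictScalars g).map (ModuleCat.ofHom φ)).hom
        ((ModuleCat.restrictScalars g).map (ModuleCat.ofHom ψ)).hom hinj hsurj hexact
  have hTall : ∀ N' : ModuleCat.{u} Bᵐᵒᵖ, N' ∈ T := fun N' => hB N' T hTexact hBres
  -- Step 4: M is a retract of the restriction of the coinduced module
  set NB : ModuleCat.{u} Bᵐᵒᵖ := (ModuleCat.coextendScalars g).obj M with hNBdef
  have hNB : (ModuleCat.restrictScalars g).obj NB ∈ S := hTall NB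
  -- identify elements of the restricted coinduced module with linear maps
  let toF : ((ModuleCat.restrictScalars g).obj NB) →
      (((ModuleCat.restrictScalars g).obj (ModuleCat.of Bᵐᵒᵖ Bᵐᵒᵖ)) →ₗ[Aᵐᵒᵖ] M) := fun φ => φ
  let ofF : (((ModuleCat.restrictScalars g).obj (ModuleCat.of Bᵐᵒᵖ Bᵐᵒᵖ)) →ₗ[Aᵐᵒᵖ] M) →
      ((ModuleCat.restrictScalars g).obj NB) := fun φ => φ
  -- the retraction r
  let r : ((ModuleCat.restrictScalars g).obj NB) →ₗ[Aᵐᵒᵖ] M :=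
    { toFun := fun φ => toF φ (MulOpposite.op (i 1))
      map_add' := fun φ ψ => rfl
      map_smul' := fun a φ => by
        show toF (a • φ) (MulOpposite.op (i 1)) = a • (toF φ (MulOpposite.op (i 1)))
        have e1 : toF (a • φ) (MulOpposite.op (i 1))
            = toF φ (MulOpposite.op (i 1) * MulOpposite.op (f a.unop)) := rfl
        have e2 : a • (toF φ (MulOpposite.op (i 1)))
            = toF φ (MulOpposite.op (f a.unop) * MulOpposite.op (i 1)) :=
          ((toF φ).map_smul a (MulOpposite.op (i 1))).symm
        rw [e1, e2, ← MulOpposite.op_mul, ← MulOpposite.op_mul, hi1, hi2] }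
  -- the section s
  let Phi : M → (((ModuleCat.restrictScalars g).obj (ModuleCat.of Bᵐᵒᵖ Bᵐᵒᵖ)) →ₗ[Aᵐᵒᵖ] M) :=
    fun m =>
      { toFun := fun x => MulOpposite.op (p (MulOpposite.unop x)) • m
        map_add' := fun x y => by
          show MulOpposite.op (p (MulOpposite.unop x + MulOpposite.unop y)) • m = _
          rw [map_add, MulOpposite.op_add, add_smul]
        map_smul' := fun a x => by
          show MulOpposite.op (p (MulOpposite.unop x * f a.unop)) • m
            = a • (MulOpposite.op (p (MulOpposite.unop x)) • m)
          rw [hp1, MulOpposite.op_mul, mul_smul]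
          rfl }
  let s : M →ₗ[Aᵐᵒᵖ] ((ModuleCat.restrictScalars g).obj NB) :=
    { toFun := fun m => ofF (Phi m)
      map_add' := fun m m' => by
        show ofF (Phi (m + m')) = ofF (Phi m + Phi m')
        refine congrArg ofF (LinearMap.ext fun x => ?_)
        show MulOpposite.op (p (MulOpposite.unop x)) • (m + m') = _
        rw [smul_add]
        rfl
      map_smul' := fun a m => by
        have key : Phi (a • m) = toF (a • ofF (Phi m)) := by
          refine LinearMap.ext fun x => ?_
          show MulOpposite.op (p (MulOpposite.unop x)) • (a • m)
            = MulOpposite.op (p (f a.unop * MulOpposite.unop x)) • m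
          rw [hp2, MulOpposite.op_mul, mul_smul]
          rfl
        show ofF (Phi (a • m)) = a • ofF (Phi m)
        rw [key] }
  have hrs : ∀ m : M, r (s m) = m := by
    intro m
    show MulOpposite.op (p (i 1)) • m = m
    rw [hpi, MulOpposite.op_one, one_smul]
  exact mem_of_retract hcolim r s hrs hNB
end

section
/- Let A be a right regular ring (in the sense of Vogel) and let n be a natural number. Then the group ring A[ℤⁿ] of the free abelian group ℤⁿ over A is right regular. -/
universe u

open CategoryTheory CategoryTheory.Limits

/-! # Auxiliary development for the proof -/

namespace VogelProof

/-! ## Generic facts about exact classes -/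

section ExactClass

variable {R : Type u} [Ring R] {S : Set (ModuleCat.{u} R)}

lemma punit_mem (h23 : SatisfiesTwoOfThree R S) {X : ModuleCat.{u} R} (hX : X ∈ S) :
    ModuleCat.of R PUnit ∈ S := by
  refine (h23 X X (ModuleCat.of R PUnit) LinearMap.id 0 (fun a b hab => hab)
    (fun y => ⟨0, Subsingleton.elim _ _⟩) (fun y => ?_)).1 hX hX
  constructor
  · intro _; exact ⟨y, rfl⟩
  · intro _; exact Subsingleton.elim _ _

lemma mem_of_linearEquiv (h23 : SatisfiesTwoOfThree R S) {X Y : ModuleCat.{u} R}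
    (e : X ≃ₗ[R] Y) (hX : X ∈ S) : Y ∈ S := by
  refine (h23 X Y (ModuleCat.of R PUnit) e.toLinearMap 0 e.injective
    (fun y => ⟨0, Subsingleton.elim _ _⟩) (fun y => ?_)).2.1 hX (punit_mem h23 hX)
  constructor
  · intro _; exact ⟨e.symm y, e.apply_symm_apply y⟩
  · intro _; exact Subsingleton.elim _ _

end ExactClass

/-! ## Transport of regularity along a ring isomorphism -/

lemma isVogelRegular_of_ringEquiv {R S : Type u} [Ring R] [Ring S] (e : R ≃+* S)
    (hR : IsVogelRegular R) : IsVogelRegular S := by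
  intro N 𝒮 h𝒮 hSS
  have hT : IsExactClass R
      {M : ModuleCat.{u} R | (ModuleCat.restrictScalars e.symm.toRingHom).obj M ∈ 𝒮} := by
    constructor
    · intro J iJ iF D c hc hD
      exact h𝒮.1 J iJ iF (D ⋙ ModuleCat.restrictScalars e.symm.toRingHom)
        ((ModuleCat.restrictScalars e.symm.toRingHom).mapCocone c)
        (isColimitOfPreserves (ModuleCat.restrictScalars e.symm.toRingHom) hc) hD
    · intro M N' P f g hf hg hfg
      let f' : ↥((ModuleCat.restrictScalars e.symm.toRingHom).obj M) →ₗ[S]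
          ↥((ModuleCat.restrictScalars e.symm.toRingHom).obj N') :=
        { toFun := f
          map_add' := f.map_add
          map_smul' := fun s x => f.map_smul (e.symm s) x }
      let g' : ↥((ModuleCat.restrictScalars e.symm.toRingHom).obj N') →ₗ[S]
          ↥((ModuleCat.restrictScalars e.symm.toRingHom).obj P) :=
        { toFun := g
          map_add' := g.map_add
          map_smul' := fun s x => g.map_smul (e.symm s) x }
      exact h𝒮.2 _ _ _ f' g' hf hg hfg
  have hRmem : ModuleCat.of R R ∈
      {M : ModuleCat.{u} R | (ModuleCat.restrictScalars e.symm.toRingHom).obj M ∈ 𝒮} := by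
    refine mem_of_linearEquiv h𝒮.2 (X := ModuleCat.of S S)
      { toFun := e.symm
        invFun := e
        left_inv := e.apply_symm_apply
        right_inv := e.symm_apply_apply
        map_add' := fun a b => map_add _ a b
        map_smul' := fun s x => map_mul e.symm s x }
      hSS
  have hall := hR ((ModuleCat.restrictScalars e.toRingHom).obj N) _ hT hRmem
  refine mem_of_linearEquiv h𝒮.2
    (X := (ModuleCat.restrictScalars e.symm.toRingHom).obj
      ((ModuleCat.restrictScalars e.toRingHom).obj N)) ?_ hall
  refine
    { toFun := id
      invFun := id
      left_inv := fun _ => rfl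
      right_inv := fun _ => rfl
      map_add' := fun _ _ => rfl
      map_smul' := fun s x => ?_ }
  show e (e.symm s) • (show ↥N from x) = s • (show ↥N from x)
  rw [e.apply_symm_apply]

/-! ## Ring isomorphisms between monoid algebras -/

section RingEquivs

/-- Replacement for the removed ring-equivalence constructor from two inverse morphisms. -/
def ringEquivOfHomInv {R S : Type*} [NonAssocSemiring R] [NonAssocSemiring S]
    (hom : R →+* S) (inv : S →+* R) (h1 : inv.comp hom = RingHom.id R)
    (h2 : hom.comp inv = RingHom.id S) : R ≃+* S :=
  RingEquiv.ofRingHom hom inv h2 h1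

/-- The monoid algebra over the trivial exponent group is the base ring. -/
noncomputable def trivialExpEquiv (R : Type u) [Ring R] :
    AddMonoidAlgebra R (Fin 0 → ℤ) ≃+* R :=
  ringEquivOfHomInv
    (AddMonoidAlgebra.liftNCRingHom (RingHom.id R) 1
      (fun x y => by simpa using Commute.one_right x))
    (AddMonoidAlgebra.singleZeroRingHom)
    (by
      apply AddMonoidAlgebra.ringHom_ext <;> intro b
      · show AddMonoidAlgebra.singleZeroRingHom
          (AddMonoidAlgebra.liftNC ((RingHom.id R) : R →+ R)
            ⇑(1 : Multiplicative (Fin 0 → ℤ) →* R) (AddMonoidAlgebra.single 0 b)) =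
          AddMonoidAlgebra.single 0 b
        rw [AddMonoidAlgebra.liftNC_single]
        simp
      · have hb : b = 0 := Subsingleton.elim _ _
        subst hb
        show AddMonoidAlgebra.singleZeroRingHom
          (AddMonoidAlgebra.liftNC ((RingHom.id R) : R →+ R)
            ⇑(1 : Multiplicative (Fin 0 → ℤ) →* R) (AddMonoidAlgebra.single 0 1)) =
          AddMonoidAlgebra.single 0 1
        rw [AddMonoidAlgebra.liftNC_single]
        simp)
    (by
      ext r
      show AddMonoidAlgebra.liftNC ((RingHom.id R) : R →+ R)
        ⇑(1 : Multiplicative (Fin 0 → ℤ) →* R) (AddMonoidAlgebra.single 0 r) = r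
      rw [AddMonoidAlgebra.liftNC_single]
      simp)

variable (R : Type u) [Ring R] (G : Type) [AddCommMonoid G]

/-- `A[G][ℤ] →+* A[G × ℤ]`. -/
noncomputable def psiHom :
    AddMonoidAlgebra (AddMonoidAlgebra R G) ℤ →+* AddMonoidAlgebra R (G × ℤ) :=
  AddMonoidAlgebra.liftNCRingHom
    (AddMonoidAlgebra.mapDomainRingHom R (AddMonoidHom.inl G ℤ))
    ((AddMonoidAlgebra.of R (G × ℤ)).comp (AddMonoidHom.toMultiplicative (AddMonoidHom.inr G ℤ)))
    (by
      intro x y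
      induction x using AddMonoidAlgebra.induction_linear with
      | zero => simpa using Commute.zero_left _
      | add p q hp hq => simpa [map_add] using Commute.add_left hp hq
      | single g r =>
        have h1 : (AddMonoidAlgebra.mapDomainRingHom R (AddMonoidHom.inl G ℤ))
            (AddMonoidAlgebra.single g r) = AddMonoidAlgebra.single ((g, 0) : G × ℤ) r := by
          rw [AddMonoidAlgebra.mapDomainRingHom_apply, AddMonoidAlgebra.mapDomain_single]; rfl
        rw [h1]
        have h2 : ((AddMonoidAlgebra.of R (G × ℤ)).comp
            (AddMonoidHom.toMultiplicative (AddMonoidHom.inr G ℤ))) y =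
            AddMonoidAlgebra.single ((0, Multiplicative.toAdd y) : G × ℤ) (1 : R) := rfl
        rw [h2]
        exact AddMonoidAlgebra.single_commute_single (AddCommute.all _ _) (Commute.one_right r))

/-- `A[G × ℤ] →+* A[G][ℤ]`. -/
noncomputable def chiHom :
    AddMonoidAlgebra R (G × ℤ) →+* AddMonoidAlgebra (AddMonoidAlgebra R G) ℤ :=
  AddMonoidAlgebra.liftNCRingHom
    (AddMonoidAlgebra.singleZeroRingHom.comp AddMonoidAlgebra.singleZeroRingHom)
    { toFun := fun p =>
        AddMonoidAlgebra.single (Multiplicative.toAdd p).2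
          (AddMonoidAlgebra.single (Multiplicative.toAdd p).1 (1 : R))
      map_one' := by
        show AddMonoidAlgebra.single (0 : ℤ) (AddMonoidAlgebra.single (0 : G) (1 : R)) =
          (1 : AddMonoidAlgebra (AddMonoidAlgebra R G) ℤ)
        simp only [← AddMonoidAlgebra.one_def]
      map_mul' := fun p q => by
        show AddMonoidAlgebra.single _ _ =
          AddMonoidAlgebra.single _ _ * AddMonoidAlgebra.single _ _
        rw [AddMonoidAlgebra.single_mul_single, AddMonoidAlgebra.single_mul_single, one_mul]
        rfl }
    (by
      intro r p
      show Commute (AddMonoidAlgebra.single (0 : ℤ) (AddMonoidAlgebra.single (0 : G) r)) _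
      exact AddMonoidAlgebra.single_commute_single (AddCommute.all _ _)
        (AddMonoidAlgebra.single_commute_single (AddCommute.all _ _) (Commute.one_right r)))

lemma psiHom_single (k : ℤ) (b : AddMonoidAlgebra R G) :
    psiHom R G (AddMonoidAlgebra.single k b) =
      (AddMonoidAlgebra.mapDomainRingHom R (AddMonoidHom.inl G ℤ)) b *
        AddMonoidAlgebra.single ((0, k) : G × ℤ) (1 : R) := by
  show AddMonoidAlgebra.liftNC _ _ (AddMonoidAlgebra.single k b) = _
  rw [AddMonoidAlgebra.liftNC_single]
  rfl

lemma chiHom_single (a : G × ℤ) (b : R) :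
    chiHom R G (AddMonoidAlgebra.single a b) =
      AddMonoidAlgebra.single a.2 (AddMonoidAlgebra.single a.1 b) := by
  show AddMonoidAlgebra.liftNC _ _ (AddMonoidAlgebra.single a b) = _
  rw [AddMonoidAlgebra.liftNC_single]
  show AddMonoidAlgebra.single (0 : ℤ) (AddMonoidAlgebra.single (0 : G) b) *
      AddMonoidAlgebra.single a.2 (AddMonoidAlgebra.single a.1 (1 : R)) = _
  rw [AddMonoidAlgebra.single_mul_single, AddMonoidAlgebra.single_mul_single, zero_add, zero_add,
    mul_one]

/-- `A[G][ℤ] ≃+* A[G × ℤ]`. -/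
noncomputable def prodEquiv :
    AddMonoidAlgebra (AddMonoidAlgebra R G) ℤ ≃+* AddMonoidAlgebra R (G × ℤ) := by
  refine ringEquivOfHomInv (psiHom R G) (chiHom R G) ?_ ?_
  · apply AddMonoidAlgebra.ringHom_ext
    · intro b
      show chiHom R G (psiHom R G (AddMonoidAlgebra.single 0 b)) = AddMonoidAlgebra.single 0 b
      rw [psiHom_single]
      rw [show AddMonoidAlgebra.single ((0, 0) : G × ℤ) (1 : R) =
        (1 : AddMonoidAlgebra R (G × ℤ)) from (AddMonoidAlgebra.one_def).symm, mul_one]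
      induction b using AddMonoidAlgebra.induction_linear with
      | zero => simp
      | add p q hp hq =>
        rw [map_add, map_add, hp, hq]
        exact (AddMonoidAlgebra.single_add 0 p q).symm
      | single g r =>
        rw [show ((AddMonoidAlgebra.mapDomainRingHom R (AddMonoidHom.inl G ℤ))
            (AddMonoidAlgebra.single g r)) = AddMonoidAlgebra.single ((g, 0) : G × ℤ) r from by
          rw [AddMonoidAlgebra.mapDomainRingHom_apply, AddMonoidAlgebra.mapDomain_single]; rfl]
        rw [chiHom_single]
    · intro a
      show chiHom R G (psiHom R G (AddMonoidAlgebra.single a 1)) = AddMonoidAlgebra.single a 1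
      rw [psiHom_single, map_one, one_mul, chiHom_single]
      show AddMonoidAlgebra.single a (AddMonoidAlgebra.single (0 : G) (1 : R)) = _
      rw [← AddMonoidAlgebra.one_def]
  · apply AddMonoidAlgebra.ringHom_ext
    · intro b
      show psiHom R G (chiHom R G (AddMonoidAlgebra.single 0 b)) = AddMonoidAlgebra.single 0 b
      rw [chiHom_single]
      show psiHom R G (AddMonoidAlgebra.single (0 : ℤ)
        (AddMonoidAlgebra.single (0 : G) b)) = _
      rw [psiHom_single]
      rw [show ((AddMonoidAlgebra.mapDomainRingHom R (AddMonoidHom.inl G ℤ))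
          (AddMonoidAlgebra.single (0 : G) b)) = AddMonoidAlgebra.single ((0, 0) : G × ℤ) b from by
        rw [AddMonoidAlgebra.mapDomainRingHom_apply, AddMonoidAlgebra.mapDomain_single]; rfl]
      rw [show AddMonoidAlgebra.single ((0, 0) : G × ℤ) (1 : R) =
        (1 : AddMonoidAlgebra R (G × ℤ)) from (AddMonoidAlgebra.one_def).symm, mul_one]
      rfl
    · intro a
      show psiHom R G (chiHom R G (AddMonoidAlgebra.single a 1)) = AddMonoidAlgebra.single a 1
      rw [chiHom_single, psiHom_single]
      rw [show ((AddMonoidAlgebra.mapDomainRingHom R (AddMonoidHom.inl G ℤ))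
          (AddMonoidAlgebra.single a.1 (1 : R))) =
          AddMonoidAlgebra.single ((a.1, 0) : G × ℤ) (1 : R) from by
        rw [AddMonoidAlgebra.mapDomainRingHom_apply, AddMonoidAlgebra.mapDomain_single]; rfl]
      rw [AddMonoidAlgebra.single_mul_single, mul_one]
      rw [show ((a.1, 0) : G × ℤ) + ((0, a.2) : G × ℤ) = a from by
        rw [Prod.mk_add_mk, add_zero, zero_add]]

/-- The exponent groups `(Fin n → ℤ) × ℤ` and `Fin (n+1) → ℤ` agree. -/
noncomputable def finSnocAddEquiv (n : ℕ) : ((Fin n → ℤ) × ℤ) ≃+ (Fin (n + 1) → ℤ) where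
  toFun p := Fin.snoc p.1 p.2
  invFun f := (Fin.init f, f (Fin.last n))
  left_inv p := by simp
  right_inv f := Fin.snoc_init_self f
  map_add' p q := by
    funext i
    refine Fin.lastCases ?_ (fun i => ?_) i <;>
      simp [Fin.snoc_last, Fin.snoc_castSucc]

/-- The step ring isomorphism `A[ℤⁿ][ℤ] ≃+* A[ℤ^(n+1)]`. -/
noncomputable def stepEquiv (n : ℕ) :
    AddMonoidAlgebra (AddMonoidAlgebra R (Fin n → ℤ)) ℤ ≃+*
      AddMonoidAlgebra R (Fin (n + 1) → ℤ) :=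
  (prodEquiv R (Fin n → ℤ)).trans
    (AddMonoidAlgebra.domCongr ℕ R (finSnocAddEquiv n)).toRingEquiv

end RingEquivs

/-! ## The induction functor `Mod R ⥤ Mod R[ℤ]` -/

section Ind

variable (R : Type u) [Ring R] (M : Type u) [AddCommGroup M] [Module R M]

/-- The action of `R` on `ℤ →₀ M` through `mapRange`. -/
noncomputable def indF : R →+* AddMonoid.End (ℤ →₀ M) where
  toFun r := Finsupp.mapRange.addMonoidHom (DistribMulAction.toAddMonoidHom M r)
  map_zero' := AddMonoidHom.ext fun g => Finsupp.ext fun a => by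
    show Finsupp.mapRange.addMonoidHom (DistribMulAction.toAddMonoidHom M (0 : R)) g a =
      (0 : ℤ →₀ M) a
    simp
  map_one' := AddMonoidHom.ext fun g => Finsupp.ext fun a => by
    show Finsupp.mapRange.addMonoidHom (DistribMulAction.toAddMonoidHom M (1 : R)) g a = g a
    simp
  map_add' r s := AddMonoidHom.ext fun g => Finsupp.ext fun a => by
    show Finsupp.mapRange.addMonoidHom (DistribMulAction.toAddMonoidHom M (r + s)) g a =
      (Finsupp.mapRange.addMonoidHom (DistribMulAction.toAddMonoidHom M r) g +
        Finsupp.mapRange.addMonoidHom (DistribMulAction.toAddMonoidHom M s) g) a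
    simp [add_smul]
  map_mul' r s := AddMonoidHom.ext fun g => Finsupp.ext fun a => by
    show Finsupp.mapRange.addMonoidHom (DistribMulAction.toAddMonoidHom M (r * s)) g a =
      Finsupp.mapRange.addMonoidHom (DistribMulAction.toAddMonoidHom M r)
        (Finsupp.mapRange.addMonoidHom (DistribMulAction.toAddMonoidHom M s) g) a
    simp [mul_smul]

lemma indF_single (r : R) (j : ℤ) (m : M) :
    indF R M r (Finsupp.single j m) = Finsupp.single j (r • m) := by
  show Finsupp.mapRange.addMonoidHom (DistribMulAction.toAddMonoidHom M r)
    (Finsupp.single j m) = _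
  rw [Finsupp.mapRange.addMonoidHom_apply, Finsupp.mapRange_single]
  rfl

/-- The action of `ℤ` on `ℤ →₀ M` through translations. -/
noncomputable def indG : Multiplicative ℤ →* AddMonoid.End (ℤ →₀ M) where
  toFun k := Finsupp.mapDomain.addMonoidHom (fun j => Multiplicative.toAdd k + j)
  map_one' := AddMonoidHom.ext fun g => by
    show Finsupp.mapDomain _ g = g
    rw [show (fun j => Multiplicative.toAdd (1 : Multiplicative ℤ) + j) = id from
      funext fun j => zero_add j]
    rw [Finsupp.mapDomain_id]
  map_mul' k l := AddMonoidHom.ext fun g => by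
    show Finsupp.mapDomain _ g = Finsupp.mapDomain _ (Finsupp.mapDomain _ g)
    rw [← Finsupp.mapDomain_comp]
    congr 1
    funext j
    show Multiplicative.toAdd (k * l) + j = _
    show Multiplicative.toAdd k + Multiplicative.toAdd l + j = _
    simp [add_assoc]

lemma indG_single (k : Multiplicative ℤ) (j : ℤ) (m : M) :
    indG M k (Finsupp.single j m) = Finsupp.single (Multiplicative.toAdd k + j) m := by
  show Finsupp.mapDomain.addMonoidHom (fun j => Multiplicative.toAdd k + j)
    (Finsupp.single j m) = _
  rw [Finsupp.mapDomain.addMonoidHom_apply, Finsupp.mapDomain_single]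

/-- The ring morphism from `R[ℤ]` to the endomorphisms of `ℤ →₀ M`. -/
noncomputable def indHom : AddMonoidAlgebra R ℤ →+* AddMonoid.End (ℤ →₀ M) :=
  AddMonoidAlgebra.liftNCRingHom (indF R M) (indG M) (fun r k => by
    refine Finsupp.addHom_ext fun j m => ?_
    show (indF R M r) ((indG M k) (Finsupp.single j m)) =
      (indG M k) ((indF R M r) (Finsupp.single j m))
    rw [indG_single, indF_single, indF_single, indG_single])

lemma indHom_single_apply (k : ℤ) (r : R) (x : ℤ →₀ M) :
    indHom R M (AddMonoidAlgebra.single k r) x =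
      (indF R M r) ((indG M (Multiplicative.ofAdd k)) x) := by
  show (AddMonoidAlgebra.liftNC ((indF R M : R →+* AddMonoid.End (ℤ →₀ M)) : R →+ _)
    ⇑(indG M) (AddMonoidAlgebra.single k r)) x = _
  rw [AddMonoidAlgebra.liftNC_single]
  rfl

/-- The underlying type of the induced module `R[ℤ] ⊗_R M`, a type synonym of `ℤ →₀ M`. -/
def Ind (R : Type u) [Ring R] (M : Type u) [AddCommGroup M] [Module R M] : Type u := ℤ →₀ M

noncomputable instance : AddCommGroup (Ind R M) :=
  inferInstanceAs (AddCommGroup (ℤ →₀ M))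

namespace Ind

variable {R M}

/-- The defining additive equivalence. -/
noncomputable def of : (ℤ →₀ M) ≃+ Ind R M := AddEquiv.refl (ℤ →₀ M)

variable (R M)

noncomputable instance : Module (AddMonoidAlgebra R ℤ) (Ind R M) :=
  { smul := fun p g => of (indHom R M p (of.symm g))
    one_smul := fun g => by
      show of (indHom R M 1 (of.symm g)) = g
      rw [map_one]; rfl
    mul_smul := fun p q g => by
      show of (indHom R M (p * q) (of.symm g)) =
        of (indHom R M p (of.symm (of (indHom R M q (of.symm g)))))
      rw [map_mul]; rfl
    smul_zero := fun p => by
      show of (indHom R M p (of.symm 0)) = 0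
      exact congrArg of (AddMonoidHom.map_zero (indHom R M p))
    smul_add := fun p g h => by
      show of (indHom R M p (of.symm (g + h))) =
        of (indHom R M p (of.symm g)) + of (indHom R M p (of.symm h))
      exact congrArg of (AddMonoidHom.map_add (indHom R M p) (of.symm g) (of.symm h))
    add_smul := fun p q g => by
      show of (indHom R M (p + q) (of.symm g)) = _
      rw [map_add]; rfl
    zero_smul := fun g => by
      show of (indHom R M 0 (of.symm g)) = 0
      rw [map_zero]; rfl }

variable {R M}

lemma smul_def (p : AddMonoidAlgebra R ℤ) (g : Ind R M) :
    p • g = of (indHom R M p (of.symm g)) := rfl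

/-- `single` for the induced module. -/
noncomputable def single (j : ℤ) (m : M) : Ind R M := of (Finsupp.single j m)

lemma of_symm_single (j : ℤ) (m : M) :
    of.symm (single (R := R) j m) = Finsupp.single j m := rfl

lemma single_add (j : ℤ) (m m' : M) :
    single (R := R) j (m + m') = single (R := R) j m + single (R := R) j m' := by
  show of _ = of _ + of _
  rw [← map_add, Finsupp.single_add]

lemma single_smul_single (k : ℤ) (r : R) (j : ℤ) (m : M) :
    (AddMonoidAlgebra.single k r : AddMonoidAlgebra R ℤ) • single (R := R) j m =
      single (R := R) (k + j) (r • m) := by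
  show of (indHom R M (AddMonoidAlgebra.single k r) (Finsupp.single j m)) =
    of (Finsupp.single (k + j) (r • m))
  refine congrArg _ ?_
  rw [indHom_single_apply, indG_single, indF_single]
  rfl

/-- Induction principle for the induced module. -/
lemma induction_on {motive : Ind R M → Prop} (g : Ind R M) (h0 : motive 0)
    (hs : ∀ j m, motive (single (R := R) j m))
    (hadd : ∀ g h, motive g → motive h → motive (g + h)) : motive g := by
  have key : ∀ x : ℤ →₀ M, motive (of x) := by
    intro x
    induction x using Finsupp.induction_linear with
    | zero => rw [map_zero]; exact h0
    | add f g hf hg => rw [map_add]; exact hadd _ _ hf hg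
    | single a b => exact hs a b
  have h := key (of.symm g)
  rwa [AddEquiv.apply_symm_apply] at h

/-- Additive maps out of `Ind R M` that commute with the action on the generators
commute with the action everywhere. -/
lemma map_smul_of_single {T : Type u} [AddCommGroup T] [Module (AddMonoidAlgebra R ℤ) T]
    (Φ : Ind R M →+ T)
    (h : ∀ (k : ℤ) (r : R) (j : ℤ) (m : M),
      Φ ((AddMonoidAlgebra.single k r : AddMonoidAlgebra R ℤ) • single (R := R) j m) =
        (AddMonoidAlgebra.single k r : AddMonoidAlgebra R ℤ) • Φ (single (R := R) j m))
    (p : AddMonoidAlgebra R ℤ) (g : Ind R M) : Φ (p • g) = p • Φ g := by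
  have hsingle : ∀ (k : ℤ) (r : R) (g : Ind R M),
      Φ ((AddMonoidAlgebra.single k r : AddMonoidAlgebra R ℤ) • g) =
        (AddMonoidAlgebra.single k r : AddMonoidAlgebra R ℤ) • Φ g := by
    intro k r g
    induction g using Ind.induction_on with
    | h0 => simp
    | hs j m => exact h k r j m
    | hadd a b ha hb => simp only [smul_add, map_add, ha, hb]
  induction p using AddMonoidAlgebra.induction_linear with
  | zero => simp
  | add p q hp hq => simp only [add_smul, map_add, hp, hq]
  | single a b => exact hsingle a b g

variable {N : Type u} [AddCommGroup N] [Module R N]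

/-- The functorial action of `Ind`, as an additive map. -/
noncomputable def mapAddHom (f : M →ₗ[R] N) : Ind R M →+ Ind R N :=
  (of : (ℤ →₀ N) ≃+ Ind R N).toAddMonoidHom.comp
    ((Finsupp.mapRange.addMonoidHom f.toAddMonoidHom).comp
      ((of : (ℤ →₀ M) ≃+ Ind R M).symm.toAddMonoidHom))

lemma mapAddHom_single (f : M →ₗ[R] N) (j : ℤ) (m : M) :
    mapAddHom f (single (R := R) j m) = single (R := R) j (f m) := by
  show of (Finsupp.mapRange.addMonoidHom f.toAddMonoidHom
    (of.symm (single (R := R) j m))) = _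
  rw [of_symm_single, Finsupp.mapRange.addMonoidHom_apply, Finsupp.mapRange_single]
  rfl

/-- The functorial action of `Ind`. -/
noncomputable def map (f : M →ₗ[R] N) :
    Ind R M →ₗ[AddMonoidAlgebra R ℤ] Ind R N where
  toFun := mapAddHom f
  map_add' := (mapAddHom f).map_add
  map_smul' p g := by
    refine map_smul_of_single (mapAddHom f) (fun k r j m => ?_) p g
    rw [single_smul_single, mapAddHom_single, mapAddHom_single, single_smul_single, f.map_smul]

lemma map_apply' (f : M →ₗ[R] N) (g : Ind R M) (a : ℤ) :
    of.symm (map f g) a = f (of.symm g a) := by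
  show (of.symm (of (Finsupp.mapRange.addMonoidHom f.toAddMonoidHom (of.symm g)))) a = _
  rw [AddEquiv.symm_apply_apply, Finsupp.mapRange.addMonoidHom_apply, Finsupp.mapRange_apply]
  rfl

lemma map_single (f : M →ₗ[R] N) (j : ℤ) (m : M) :
    map f (single (R := R) j m) = single (R := R) j (f m) :=
  mapAddHom_single f j m

end Ind

/-- The induction functor. -/
noncomputable def indFunctor :
    ModuleCat.{u} R ⥤ ModuleCat.{u} (AddMonoidAlgebra R ℤ) where
  obj M := ModuleCat.of _ (Ind R M)
  map f := ModuleCat.ofHom (Ind.map f.hom)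
  map_id M := ModuleCat.hom_ext <| LinearMap.ext fun g => by
    refine (Ind.of (R := R) (M := ↥M)).symm.injective (Finsupp.ext fun a => ?_)
    exact Ind.map_apply' LinearMap.id g a
  map_comp {X Y Z} f g := ModuleCat.hom_ext <| LinearMap.ext fun x => by
    refine (Ind.of (R := R) (M := ↥Z)).symm.injective (Finsupp.ext fun a => ?_)
    refine (Ind.map_apply' (LinearMap.comp g.hom f.hom) x a).trans ?_
    exact ((Ind.map_apply' g.hom (Ind.map f.hom x) a).trans
      (congrArg (⇑g.hom) (Ind.map_apply' f.hom x a))).symm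

attribute [reducible] indFunctor

/-- The inclusion `R →+* R[ℤ]`. -/
noncomputable def iota : R →+* AddMonoidAlgebra R ℤ :=
  AddMonoidAlgebra.singleZeroRingHom

variable {R}

/-- The additive map underlying the counit-style morphism `Ind R M → T`. -/
noncomputable def piAdd {M : Type u} [AddCommGroup M] [Module R M]
    {T : Type u} [AddCommGroup T] [Module (AddMonoidAlgebra R ℤ) T]
    (f : M →+ T) : Ind R M →+ T where
  toFun g := (Ind.of.symm g).sum fun k m =>
    (AddMonoidAlgebra.single k (1 : R) : AddMonoidAlgebra R ℤ) • f m
  map_zero' := by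
    rw [show (Ind.of.symm (0 : Ind R M)) = 0 from rfl, Finsupp.sum_zero_index]
  map_add' g h := by
    rw [show (Ind.of.symm (g + h)) = Ind.of.symm g + Ind.of.symm h from rfl]
    exact Finsupp.sum_add_index' (fun k => by rw [map_zero, smul_zero])
      (fun k m m' => by rw [map_add, smul_add])

lemma piAdd_single {M : Type u} [AddCommGroup M] [Module R M]
    {T : Type u} [AddCommGroup T] [Module (AddMonoidAlgebra R ℤ) T]
    (f : M →+ T) (j : ℤ) (m : M) :
    piAdd f (Ind.single (R := R) j m) =
      (AddMonoidAlgebra.single j (1 : R) : AddMonoidAlgebra R ℤ) • f m := by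
  show (Finsupp.single j m).sum (fun k m =>
    (AddMonoidAlgebra.single k (1 : R) : AddMonoidAlgebra R ℤ) • f m) = _
  rw [Finsupp.sum_single_index]
  rw [map_zero, smul_zero]

/-- The `R[ℤ]`-linear extension of an `R`-linear map into a restricted module. -/
noncomputable def piLin {M : Type u} [AddCommGroup M] [Module R M]
    {N : ModuleCat.{u} (AddMonoidAlgebra R ℤ)}
    (f : M →ₗ[R] (ModuleCat.restrictScalars (iota R)).obj N) :
    Ind R M →ₗ[AddMonoidAlgebra R ℤ] N where
  toFun := piAdd f.toAddMonoidHom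
  map_add' := (piAdd f.toAddMonoidHom).map_add
  map_smul' p g := by
    refine Ind.map_smul_of_single (piAdd f.toAddMonoidHom) (fun k r j m => ?_) p g
    rw [Ind.single_smul_single, piAdd_single, piAdd_single]
    show (AddMonoidAlgebra.single (k + j) (1 : R) : AddMonoidAlgebra R ℤ) • f (r • m) = _
    rw [f.map_smul]
    show (AddMonoidAlgebra.single (k + j) (1 : R) : AddMonoidAlgebra R ℤ) •
        ((AddMonoidAlgebra.single 0 r : AddMonoidAlgebra R ℤ) • f m) =
      (AddMonoidAlgebra.single k r : AddMonoidAlgebra R ℤ) •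
        ((AddMonoidAlgebra.single j (1 : R) : AddMonoidAlgebra R ℤ) • f m)
    rw [← mul_smul, ← mul_smul, AddMonoidAlgebra.single_mul_single,
      AddMonoidAlgebra.single_mul_single, add_zero, mul_one, one_mul]

variable (R)

/-- The induction-restriction adjunction. -/
noncomputable def indAdj :
    indFunctor R ⊣ ModuleCat.restrictScalars (iota R) :=
  Adjunction.mkOfHomEquiv
    { homEquiv := fun M N =>
        { toFun := fun φ => ModuleCat.ofHom (X := ↥M) (Y := ↥((ModuleCat.restrictScalars (iota R)).obj N))
            { toFun := fun m => φ (Ind.single (R := R) 0 m)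
              map_add' := fun m m' => by dsimp only; rw [Ind.single_add, map_add]; rfl
              map_smul' := fun r m => by
                show φ (Ind.single (R := R) 0 (r • m)) =
                  (AddMonoidAlgebra.single 0 r : AddMonoidAlgebra R ℤ) • φ (Ind.single (R := R) 0 m)
                rw [← φ.hom.map_smul, Ind.single_smul_single, zero_add] }
          invFun := fun f => ModuleCat.ofHom (piLin f.hom)
          left_inv := fun φ => ModuleCat.hom_ext <| LinearMap.ext fun g => by
            show (Ind.of.symm g).sum (fun k m =>
              (AddMonoidAlgebra.single k (1 : R) : AddMonoidAlgebra R ℤ) •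
                φ (Ind.single (R := R) 0 m)) = φ g
            have h1 : ∀ (k : ℤ) (m : M),
                (AddMonoidAlgebra.single k (1 : R) : AddMonoidAlgebra R ℤ) •
                  φ (Ind.single (R := R) 0 m) = φ (Ind.single (R := R) k m) := by
              intro k m
              rw [← φ.hom.map_smul, Ind.single_smul_single, add_zero, one_smul]
            simp_rw [h1]
            rw [← map_finsuppSum]
            congr 1
            apply Ind.of.symm.injective
            rw [map_finsuppSum]
            simp_rw [Ind.of_symm_single]
            exact Finsupp.sum_single (Ind.of.symm g)
          right_inv := fun f => ModuleCat.hom_ext <| LinearMap.ext fun m => by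
            show piAdd f.hom.toAddMonoidHom (Ind.single (R := R) 0 m) = f m
            rw [piAdd_single]
            rw [show (AddMonoidAlgebra.single (0:ℤ) (1:R) : AddMonoidAlgebra R ℤ) = 1 from
              (AddMonoidAlgebra.one_def).symm, one_smul]
            rfl }
      homEquiv_naturality_left_symm := fun f g => ModuleCat.hom_ext <| LinearMap.ext fun x => by
        show (Ind.of.symm x).sum (fun k m =>
            (AddMonoidAlgebra.single k (1 : R) : AddMonoidAlgebra R ℤ) • g (f m)) =
          piAdd g.hom.toAddMonoidHom (Ind.map f.hom x)
        show _ = (Ind.of.symm (Ind.of (Finsupp.mapRange f f.hom.map_zero (Ind.of.symm x)))).sum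
          (fun k m => (AddMonoidAlgebra.single k (1 : R) : AddMonoidAlgebra R ℤ) • g m)
        rw [AddEquiv.symm_apply_apply]
        rw [Finsupp.sum_mapRange_index (fun k => by rw [map_zero, smul_zero])]
      homEquiv_naturality_right := fun φ g => ModuleCat.hom_ext <| LinearMap.ext fun m => rfl }

variable {R}

end Ind

/-! ## The main step : regularity passes to Laurent extensions -/

section MainStep

variable {R : Type u} [Ring R]

/-- `t = single 1 1` is central in `R[ℤ]`. -/
lemma t_central (p : AddMonoidAlgebra R ℤ) :
    (AddMonoidAlgebra.single 1 (1 : R) : AddMonoidAlgebra R ℤ) * p =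
      p * (AddMonoidAlgebra.single 1 (1 : R) : AddMonoidAlgebra R ℤ) := by
  induction p using AddMonoidAlgebra.induction_linear with
  | zero => rw [mul_zero, zero_mul]
  | add p q hp hq => rw [mul_add, add_mul, hp, hq]
  | single a b =>
    rw [AddMonoidAlgebra.single_mul_single, AddMonoidAlgebra.single_mul_single, add_comm,
      one_mul, mul_one]

/-- `t • -` described through `mapDomain`. -/
lemma t_smul_eq_mapDomain {M : Type u} [AddCommGroup M] [Module R M] (g : Ind R M) :
    (AddMonoidAlgebra.single 1 (1 : R) : AddMonoidAlgebra R ℤ) • g =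
      Ind.of (Finsupp.mapDomain (fun j => 1 + j) (Ind.of.symm g)) := by
  show Ind.of (indHom R M (AddMonoidAlgebra.single 1 1) (Ind.of.symm g)) = _
  refine congrArg _ ?_
  rw [indHom_single_apply, map_one]
  rfl

lemma t_smul_apply {M : Type u} [AddCommGroup M] [Module R M] (g : Ind R M) (a : ℤ) :
    Ind.of.symm ((AddMonoidAlgebra.single 1 (1 : R) : AddMonoidAlgebra R ℤ) • g) a =
      Ind.of.symm g (a - 1) := by
  rw [t_smul_eq_mapDomain, AddEquiv.symm_apply_apply]
  have ha : a = (fun j => 1 + j) (a - 1) := by show a = 1 + (a - 1); ring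
  conv_lhs => rw [ha]
  rw [Finsupp.mapDomain_apply (fun x y h => by omega)]

/-- `Ind R R ≃ R[ℤ]` as `R[ℤ]`-modules. -/
noncomputable def indSelfEquiv :
    Ind R R ≃ₗ[AddMonoidAlgebra R ℤ] AddMonoidAlgebra R ℤ :=
  { toFun := fun g => AddMonoidAlgebra.ofCoeff (Ind.of.symm g)
    invFun := fun p => Ind.of p.coeff
    left_inv := fun g => AddEquiv.apply_symm_apply _ g
    right_inv := fun p => rfl
    map_add' := fun g h => rfl
    map_smul' := fun p g => by
      refine Ind.map_smul_of_single
        (T := AddMonoidAlgebra R ℤ)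
        { toFun := fun g => AddMonoidAlgebra.ofCoeff (Ind.of.symm g)
          map_zero' := rfl
          map_add' := fun g h => rfl }
        (fun k r j m => ?_) p g
      show AddMonoidAlgebra.ofCoeff (Ind.of.symm ((AddMonoidAlgebra.single k r : AddMonoidAlgebra R ℤ) •
        Ind.single (R := R) j m)) = _
      rw [Ind.single_smul_single, Ind.of_symm_single]
      show (AddMonoidAlgebra.single (k + j) (r • m) : AddMonoidAlgebra R ℤ) =
        (AddMonoidAlgebra.single k r : AddMonoidAlgebra R ℤ) *
          (AddMonoidAlgebra.single j m : AddMonoidAlgebra R ℤ)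
      rw [AddMonoidAlgebra.single_mul_single, smul_eq_mul] }

theorem step_laurent (hR : IsVogelRegular R) :
    IsVogelRegular (AddMonoidAlgebra R ℤ) := by
  intro N 𝒮 h𝒮 hB
  -- Step 1 : all induced modules belong to 𝒮.
  have hT : IsExactClass R {M : ModuleCat.{u} R | (indFunctor R).obj M ∈ 𝒮} := by
    constructor
    · intro J iJ iF D c hc hD
      haveI : PreservesColimitsOfSize.{u, u} (indFunctor R) :=
        (indAdj R).leftAdjoint_preservesColimits
      exact h𝒮.1 J iJ iF (D ⋙ indFunctor R) ((indFunctor R).mapCocone c)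
        (isColimitOfPreserves (indFunctor R) hc) hD
    · intro M N' P f g hf hg hfg
      refine h𝒮.2 ((indFunctor R).obj M) ((indFunctor R).obj N') ((indFunctor R).obj P)
        (Ind.map f) (Ind.map g) ?_ ?_ ?_
      · -- injectivity
        intro x y hxy
        have h1 := congrArg (⇑(Ind.of (R := R) (M := ↥N')).symm) hxy
        exact Ind.of.symm.injective
          ((Finsupp.mapRange_injective (⇑f) f.map_zero hf) h1)
      · -- surjectivity
        intro y
        obtain ⟨x', hx'⟩ := (Finsupp.mapRange_surjective (⇑g) g.map_zero hg)
          ((Ind.of (R := R) (M := ↥P)).symm y)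
        refine ⟨Ind.of (R := R) (M := ↥N') x', ?_⟩
        show Ind.of (R := R) (M := ↥P) (Finsupp.mapRange g g.map_zero ((Ind.of (R := R) (M := ↥N')).symm (Ind.of (R := R) (M := ↥N') x'))) = y
        rw [AddEquiv.symm_apply_apply, hx']
        exact AddEquiv.apply_symm_apply _ y
      · -- exactness
        intro y
        constructor
        · intro hy
          have h0 : Function.invFun (⇑f) 0 = 0 := by
            have h00 : f 0 = 0 := map_zero f
            have h01 := Function.leftInverse_invFun hf 0
            rw [h00] at h01; exact h01
          refine ⟨Ind.of (R := R) (M := ↥M) (Finsupp.mapRange (Function.invFun (⇑f)) h0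
            ((Ind.of (R := R) (M := ↥N')).symm y)), ?_⟩
          refine (Ind.of (R := R) (M := ↥N')).symm.injective (Finsupp.ext fun a => ?_)
          refine (Ind.map_apply' f
            (Ind.of (R := R) (M := ↥M) (Finsupp.mapRange (Function.invFun (⇑f)) h0
              ((Ind.of (R := R) (M := ↥N')).symm y))) a).trans ?_
          rw [AddEquiv.symm_apply_apply, Finsupp.mapRange_apply]
          apply Function.invFun_eq
          have h1 : Ind.of.symm (Ind.map g y) = (0 : ℤ →₀ ↥P) :=
            (congrArg (⇑(Ind.of (R := R) (M := ↥P)).symm) hy).trans rfl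
          have h2 : g (Ind.of.symm y a) = 0 :=
            ((Ind.map_apply' g y a).symm.trans
              (congrArg (fun z : ℤ →₀ ↥P => z a) h1)).trans rfl
          exact (hfg _).mp h2
        · rintro ⟨x, rfl⟩
          refine (Ind.of (R := R) (M := ↥P)).symm.injective (Finsupp.ext fun a => ?_)
          refine ((Ind.map_apply' g (Ind.map f x) a).trans ?_)
          refine (congrArg (⇑g) (Ind.map_apply' f x a)).trans ?_
          rw [hfg.apply_apply_eq_zero]
          rfl
  have hRmem : ModuleCat.of R R ∈ {M : ModuleCat.{u} R | (indFunctor R).obj M ∈ 𝒮} :=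
    mem_of_linearEquiv h𝒮.2 (indSelfEquiv (R := R)).symm hB
  have hall : ∀ M : ModuleCat.{u} R, (indFunctor R).obj M ∈ 𝒮 := fun M => hR M _ hT hRmem
  -- Step 2 : the characteristic exact sequence.
  set MN : ModuleCat.{u} R := (ModuleCat.restrictScalars (iota R)).obj N with hMN
  set τ : MN →ₗ[R] MN :=
    { toFun := fun x => (AddMonoidAlgebra.single 1 (1 : R) : AddMonoidAlgebra R ℤ) • x
      map_add' := fun x y => smul_add _ x y
      map_smul' := fun r x => by
        show (AddMonoidAlgebra.single 1 (1 : R) : AddMonoidAlgebra R ℤ) •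
            ((AddMonoidAlgebra.single 0 r : AddMonoidAlgebra R ℤ) • x) =
          (AddMonoidAlgebra.single 0 r : AddMonoidAlgebra R ℤ) •
            ((AddMonoidAlgebra.single 1 (1 : R) : AddMonoidAlgebra R ℤ) • x)
        rw [← mul_smul, ← mul_smul, AddMonoidAlgebra.single_mul_single,
          AddMonoidAlgebra.single_mul_single, add_comm, one_mul, mul_one] } with hτ
  set tS : Ind R ↥MN →ₗ[AddMonoidAlgebra R ℤ] Ind R ↥MN :=
    { toFun := fun g => (AddMonoidAlgebra.single 1 (1 : R) : AddMonoidAlgebra R ℤ) • g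
      map_add' := fun a b => smul_add _ a b
      map_smul' := fun p a => by
        show (AddMonoidAlgebra.single 1 (1 : R) : AddMonoidAlgebra R ℤ) • (p • a) =
          p • ((AddMonoidAlgebra.single 1 (1 : R) : AddMonoidAlgebra R ℤ) • a)
        rw [← mul_smul, ← mul_smul, t_central] } with htS
  set α : Ind R ↥MN →ₗ[AddMonoidAlgebra R ℤ] Ind R ↥MN := tS - Ind.map τ with hα
  set π : Ind R ↥MN →ₗ[AddMonoidAlgebra R ℤ] ↥N :=
    piLin (LinearMap.id : MN →ₗ[R] (ModuleCat.restrictScalars (iota R)).obj N) with hπ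
  have hπs : ∀ (j : ℤ) (m : ↥MN),
      π (Ind.single (R := R) j m) = (AddMonoidAlgebra.single j (1 : R) : AddMonoidAlgebra R ℤ) • m := by
    intro j m
    exact piAdd_single (T := ↥N) _ j m
  have hαval : ∀ (g : Ind R ↥MN) (a : ℤ),
      Ind.of.symm (α g) a = Ind.of.symm g (a - 1) - τ (Ind.of.symm g a) := by
    intro g a
    show Ind.of.symm (tS g - Ind.map τ g) a = _
    rw [map_sub, Finsupp.sub_apply]
    exact congrArg₂ (fun u v => u - v) (t_smul_apply g a) (Ind.map_apply' τ g a)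
  -- α is injective
  have hαinj : Function.Injective α := by
    have hker : ∀ g, α g = 0 → g = 0 := by
      intro g hg
      by_contra hgne
      have hne : Ind.of.symm g ≠ 0 := fun h0 =>
        hgne (Ind.of.symm.injective (by rw [h0]; rfl))
      have hsupp : (Ind.of.symm g).support.Nonempty := Finsupp.support_nonempty_iff.mpr hne
      set k := (Ind.of.symm g).support.max' hsupp with hk
      have hvals : ∀ a : ℤ, Ind.of.symm g (a - 1) = τ (Ind.of.symm g a) := by
        intro a
        have h1 : Ind.of.symm (α g) a = 0 := by rw [hg]; rfl
        rw [hαval] at h1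
        exact sub_eq_zero.mp h1
      have h1 : Ind.of.symm g (k + 1) = 0 := by
        apply Finsupp.notMem_support_iff.mp
        intro hmem
        have := Finset.le_max' _ _ hmem
        omega
      have h2 : Ind.of.symm g k = 0 := by
        have h3 := hvals (k + 1)
        rw [add_sub_cancel_right, h1, map_zero] at h3
        exact h3
      exact Finsupp.mem_support_iff.mp ((Ind.of.symm g).support.max'_mem hsupp) h2
    intro x y hxy
    have h4 := hker (x - y) (by rw [map_sub, hxy, sub_self])
    exact sub_eq_zero.mp h4
  -- π is surjective
  have hπsurj : Function.Surjective π := by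
    intro x
    refine ⟨Ind.single (R := R) (M := ↥MN) 0 x, ?_⟩
    refine (hπs 0 x).trans ?_
    rw [show (AddMonoidAlgebra.single (0:ℤ) (1:R) : AddMonoidAlgebra R ℤ) = 1 from
      (AddMonoidAlgebra.one_def).symm]
    exact one_smul _ (x : ↥N)
  -- exactness
  have hπα : ∀ g, π (α g) = 0 := by
    intro g
    induction g using Ind.induction_on with
    | h0 => rw [map_zero, map_zero]
    | hadd a b ha hb => rw [map_add, map_add, ha, hb, add_zero]
    | hs j m =>
      have hαs : α (Ind.single (R := R) j m) =
          Ind.single (R := R) (1 + j) m - Ind.single (R := R) j (τ m) := by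
        show tS (Ind.single (R := R) j m) - Ind.map τ (Ind.single (R := R) j m) = _
        rw [Ind.map_single]
        congr 1
        show (AddMonoidAlgebra.single 1 (1 : R) : AddMonoidAlgebra R ℤ) • Ind.single (R := R) j m = _
        rw [Ind.single_smul_single, one_smul]
      rw [hαs, map_sub, hπs, hπs]
      show (AddMonoidAlgebra.single (1 + j) (1:R) : AddMonoidAlgebra R ℤ) • (m : ↥N) -
        (AddMonoidAlgebra.single j (1:R) : AddMonoidAlgebra R ℤ) •
          ((AddMonoidAlgebra.single 1 (1:R) : AddMonoidAlgebra R ℤ) • (m : ↥N)) = 0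
      rw [← mul_smul, AddMonoidAlgebra.single_mul_single, add_comm j 1, mul_one, sub_self]
  have hexact : Function.Exact (⇑α) (⇑π) := by
    intro y
    constructor
    · intro hy
      by_cases hy0 : y = 0
      · exact ⟨0, by rw [map_zero, hy0]⟩
      have hne : Ind.of.symm y ≠ 0 := fun h0 =>
        hy0 (Ind.of.symm.injective (by rw [h0]; rfl))
      have hsupp : (Ind.of.symm y).support.Nonempty := Finsupp.support_nonempty_iff.mpr hne
      set s := (Ind.of.symm y).support with hs
      set lo := s.min' hsupp with hlo
      set hi := s.max' hsupp with hhi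
      set yy : ℤ → ↥MN := fun j => Ind.of.symm y j with hyy
      set hfun : ℤ → ↥MN := fun a => ∑ j ∈ s.filter (fun j => a < j),
        (AddMonoidAlgebra.single (j - a - 1) (1 : R) : AddMonoidAlgebra R ℤ) • yy j with hhfun
      have hπy : Finsupp.sum (Ind.of.symm y) (fun k m =>
          (AddMonoidAlgebra.single k (1 : R) : AddMonoidAlgebra R ℤ) • m) = 0 := hy
      have hzero : ∀ a, a ∉ Finset.Ico lo hi → hfun a = 0 := by
        intro a ha
        rw [Finset.mem_Ico] at ha
        push_neg at ha
        by_cases h1 : hi ≤ a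
        · have hfil : s.filter (fun j => a < j) = ∅ :=
            Finset.filter_false_of_mem (fun j hj => by
              have := Finset.le_max' s j hj
              omega)
          show (∑ j ∈ s.filter (fun j => a < j), _) = (0 : ↥MN)
          rw [hfil, Finset.sum_empty]
        · have hlo' : a < lo := by
            by_contra h2
            push_neg at h2
            have := ha h2
            omega
          have hfil : s.filter (fun j => a < j) = s :=
            Finset.filter_true_of_mem (fun j hj => by
              have := Finset.min'_le s j hj
              omega)
          show (∑ j ∈ s.filter (fun j => a < j), _) = (0 : ↥MN)
          rw [hfil]
          have hterm : ∀ j ∈ s,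
              (AddMonoidAlgebra.single (j - a - 1) (1 : R) : AddMonoidAlgebra R ℤ) • yy j =
                (AddMonoidAlgebra.single (-a - 1) (1 : R) : AddMonoidAlgebra R ℤ) •
                  ((AddMonoidAlgebra.single j (1 : R) : AddMonoidAlgebra R ℤ) • yy j) := by
            intro j hj
            rw [← mul_smul, AddMonoidAlgebra.single_mul_single, one_mul,
              show (-a - 1) + j = j - a - 1 from by ring]
          rw [Finset.sum_congr rfl hterm, ← Finset.smul_sum]
          have hsum0 : (∑ j ∈ s, (AddMonoidAlgebra.single j (1 : R) : AddMonoidAlgebra R ℤ) • yy j) =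
              (0 : ↥MN) := hπy
          rw [hsum0, smul_zero]
      have hbound : ∀ a, hfun a ≠ 0 → a ∈ Finset.Ico lo hi := fun a ha => by
        by_contra hmem
        exact ha (hzero a hmem)
      refine ⟨Ind.of (R := R) (M := ↥MN) (Finsupp.onFinset (Finset.Ico lo hi) hfun hbound), ?_⟩
      refine (Ind.of (R := R) (M := ↥MN)).symm.injective (Finsupp.ext fun a => ?_)
      rw [hαval]
      have hofs : ∀ b : ℤ, (Ind.of (R := R) (M := ↥MN)).symm (Ind.of (R := R) (M := ↥MN)
          (Finsupp.onFinset (Finset.Ico lo hi) hfun hbound)) b = hfun b := by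
        intro b
        rw [AddEquiv.symm_apply_apply]
        exact Finsupp.onFinset_apply
      rw [hofs, hofs]
      have hτsum : τ (hfun a) = ∑ j ∈ s.filter (fun j => a < j),
          (AddMonoidAlgebra.single (j - a) (1 : R) : AddMonoidAlgebra R ℤ) • yy j := by
        show (AddMonoidAlgebra.single 1 (1 : R) : AddMonoidAlgebra R ℤ) • (hfun a) = _
        rw [hhfun]
        rw [Finset.smul_sum]
        refine Finset.sum_congr rfl fun j hj => ?_
        rw [← mul_smul, AddMonoidAlgebra.single_mul_single, one_mul,
          show (1 : ℤ) + (j - a - 1) = j - a from by ring]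
      have hfa : hfun (a - 1) = ∑ j ∈ s.filter (fun j => a ≤ j),
          (AddMonoidAlgebra.single (j - a) (1 : R) : AddMonoidAlgebra R ℤ) • yy j := by
        rw [hhfun]
        have hfil : s.filter (fun j => a - 1 < j) = s.filter (fun j => a ≤ j) := by
          refine Finset.filter_congr fun j hj => ?_
          constructor <;> intro h <;> omega
        simp only
        rw [hfil]
        refine Finset.sum_congr rfl fun j hj => ?_
        rw [show j - (a - 1) - 1 = j - a from by ring]
      rw [hτsum, hfa]
      have hsplit : s.filter (fun j => a ≤ j) =
          (s.filter (fun j => a < j)) ∪ (s.filter (fun j => j = a)) := by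
        ext j
        simp only [Finset.mem_filter, Finset.mem_union]
        constructor
        · rintro ⟨hj1, hj2⟩
          by_cases hja : j = a
          · exact Or.inr ⟨hj1, hja⟩
          · exact Or.inl ⟨hj1, by omega⟩
        · rintro (⟨hj1, hj2⟩ | ⟨hj1, hj2⟩)
          · exact ⟨hj1, by omega⟩
          · exact ⟨hj1, by omega⟩
      have hdisj : Disjoint (s.filter (fun j => a < j)) (s.filter (fun j => j = a)) := by
        rw [Finset.disjoint_left]
        intro j hj1 hj2
        rw [Finset.mem_filter] at hj1 hj2
        omega
      rw [hsplit, Finset.sum_union hdisj, add_sub_cancel_left]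
      rw [Finset.sum_filter, Finset.sum_ite_eq' s a
        (fun j => (AddMonoidAlgebra.single (j - a) (1 : R) : AddMonoidAlgebra R ℤ) • yy j)]
      by_cases hmem : a ∈ s
      · rw [if_pos hmem, sub_self,
          show (AddMonoidAlgebra.single (0:ℤ) (1:R) : AddMonoidAlgebra R ℤ) = 1 from
            (AddMonoidAlgebra.one_def).symm, one_smul]
      · rw [if_neg hmem]
        exact (Finsupp.notMem_support_iff.mp hmem).symm
    · rintro ⟨g, rfl⟩
      exact hπα g
  exact (h𝒮.2 ((indFunctor R).obj MN) ((indFunctor R).obj MN) N α π hαinj hπsurj hexact).1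
    (hall MN) (hall MN)

end MainStep

/-- Regularity of all the rings `R[ℤⁿ]`. -/
theorem regular_addMonoidAlgebra_finint {R : Type u} [Ring R] (hR : IsVogelRegular R) :
    ∀ n : ℕ, IsVogelRegular (AddMonoidAlgebra R (Fin n → ℤ))
  | 0 => isVogelRegular_of_ringEquiv (trivialExpEquiv R).symm hR
  | (n + 1) =>
    isVogelRegular_of_ringEquiv (stepEquiv R n)
      (step_laurent (regular_addMonoidAlgebra_finint hR n))

end VogelProof

/-- if `A` is a right regular ring (in the sense of Vogel) and
`n` is a natural number, then the group ring `A[ℤⁿ]` of the free abelian group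
`ℤⁿ` over `A` is right regular. -/
theorem isVogelRightRegular_groupRing_free_abelian
    (A : Type u) [Ring A] (hA : IsVogelRightRegular A) (n : ℕ) :
    IsVogelRightRegular (AddMonoidAlgebra A (Fin n → ℤ)) := by
  have h1 : IsVogelRegular (AddMonoidAlgebra Aᵐᵒᵖ (Fin n → ℤ)) :=
    VogelProof.regular_addMonoidAlgebra_finint hA n
  have e : AddMonoidAlgebra Aᵐᵒᵖ (Fin n → ℤ) ≃+* (AddMonoidAlgebra A (Fin n → ℤ))ᵐᵒᵖ :=
    (AddMonoidAlgebra.domCongr ℕ Aᵐᵒᵖ (AddOpposite.opAddEquiv (M := Fin n → ℤ))).toRingEquiv.trans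
      AddMonoidAlgebra.opRingEquiv.symm
  exact VogelProof.isVogelRegular_of_ringEquiv e h1
end
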